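/- arXiv:1603.05697 — 7 statements merged into one kernel-verified Lean document; each statement's English description precedes it below -/
import Mathlib

section
/- Let V : (0, ∞) → Matrix (Fin m) (Fin m) ℝ be a differentiable, symmetric-valued solution of the Riccati equation V' + V² + K = 0, where K(t) is symmetric and K(t) ≥ −k²·I (as quadratic forms) for all t > 0 and some k > 0. Then the operator norm satisfies ‖V(t)‖ ≤ k·coth(k t) for all t > 0. -/
open Matrix MeasureTheory

noncomputable section

attribute [local instance] Matrix.normedAddCommGroup Matrix.normedSpace

/-- The operator (spectral) norm of a real square matrix. -/
def opNorm {m : ℕ} (M : Matrix (Fin m) (Fin m) ℝ) : ℝ :=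
  ‖Matrix.toEuclideanCLM (𝕜 := ℝ) M‖

open Real Set Filter Topology InnerProductSpace

section Aux

/-- Scalar Riccati comparison via Gronwall. -/
lemma riccati_scalar_comp {k a b : ℝ} {f g f' g' : ℝ → ℝ} (hab : a ≤ b)
    (hf : ∀ t ∈ Icc a b, HasDerivAt f (f' t) t)
    (hg : ∀ t ∈ Icc a b, HasDerivAt g (g' t) t)
    (hfle : ∀ t ∈ Icc a b, f' t ≤ k ^ 2 - f t ^ 2)
    (hgge : ∀ t ∈ Icc a b, k ^ 2 - g t ^ 2 ≤ g' t)
    (hfa : f a ≤ g a) : f b ≤ g b := by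
  by_contra hcon
  push_neg at hcon
  set d : ℝ → ℝ := fun t => f t - g t with hd_def
  have hfc : ContinuousOn f (Icc a b) := fun t ht => ((hf t ht).continuousAt).continuousWithinAt
  have hgc : ContinuousOn g (Icc a b) := fun t ht => ((hg t ht).continuousAt).continuousWithinAt
  have hdc : ContinuousOn d (Icc a b) := hfc.sub hgc
  set S : Set ℝ := Icc a b ∩ d ⁻¹' (Iic 0) with hS_def
  have hSsub : S ⊆ Icc a b := Set.inter_subset_left
  have haS : a ∈ S := ⟨⟨le_refl a, hab⟩, sub_nonpos.mpr hfa⟩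
  have hSclosed : IsClosed S := hdc.preimage_isClosed_of_isClosed isClosed_Icc isClosed_Iic
  have hScompact : IsCompact S := isCompact_Icc.of_isClosed_subset hSclosed hSsub
  set T := sSup S with hT_def
  have hTS : T ∈ S := hScompact.sSup_mem ⟨a, haS⟩
  have hTd : d T ≤ 0 := hTS.2
  have hTb : T < b := by
    rcases lt_or_eq_of_le hTS.1.2 with h | h
    · exact h
    · have hb : (0:ℝ) < d b := sub_pos.mpr hcon
      rw [h] at hTd; linarith
  have hbdd : BddAbove S := hScompact.bddAbove
  have hpos : ∀ t ∈ Ioc T b, 0 < d t := by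
    intro t ht
    by_contra h
    push_neg at h
    have : t ∈ S := ⟨⟨hTS.1.1.trans ht.1.le, ht.2⟩, h⟩
    exact absurd (le_csSup hbdd this) (not_le.mpr ht.1)
  have hdT0 : 0 ≤ d T := by
    have hcw : ContinuousWithinAt d (Ioi T) T :=
      ((hf T hTS.1).sub (hg T hTS.1)).continuousAt.continuousWithinAt
    refine ge_of_tendsto hcw ?_
    filter_upwards [Ioc_mem_nhdsGT_of_mem ⟨le_refl T, hTb⟩] with t ht
    exact (hpos t ht).le
  obtain ⟨M, hM⟩ := isCompact_Icc.exists_bound_of_continuousOn (hfc.add hgc)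
  set M' := max M 0 with hM'_def
  have key := le_gronwallBound_of_liminf_deriv_right_le (f := d)
      (f' := fun t => f' t - g' t) (δ := 0) (K := M') (ε := 0) (a := T) (b := b)
      (hdc.mono (Icc_subset_Icc hTS.1.1 le_rfl)) ?_ hTd ?_ b ⟨hTb.le, le_refl b⟩
  · rw [gronwallBound_ε0_δ0] at key
    exact absurd key (sub_pos.mpr hcon).not_ge
  · intro x hx r hr
    have hxab : x ∈ Icc a b := ⟨hTS.1.1.trans hx.1, hx.2.le⟩
    have hdx : HasDerivAt d (f' x - g' x) x := (hf x hxab).sub (hg x hxab)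
    have hslope : Tendsto (slope d x) (nhdsWithin x (Ioi x)) (nhds (f' x - g' x)) := by
      have := (hdx.hasDerivWithinAt (s := Ioi x))
      rw [hasDerivWithinAt_iff_tendsto_slope] at this
      rwa [Set.diff_singleton_eq_self (notMem_Ioi.mpr le_rfl)] at this
    have hev : ∀ᶠ z in nhdsWithin x (Ioi x), (z - x)⁻¹ * (d z - d x) < r := by
      filter_upwards [hslope.eventually_lt_const hr] with z hz
      rwa [slope_def_field, div_eq_inv_mul] at hz
    exact hev.frequently
  · intro x hx
    have hxab : x ∈ Icc a b := ⟨hTS.1.1.trans hx.1, hx.2.le⟩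
    have hdx0 : 0 ≤ d x := by
      rcases eq_or_lt_of_le hx.1 with h | h
      · exact h ▸ hdT0
      · exact (hpos x ⟨h, hx.2.le⟩).le
    have h1 : f' x - g' x ≤ g x ^ 2 - f x ^ 2 := by
      have := hfle x hxab; have := hgge x hxab; linarith
    have h2 : g x ^ 2 - f x ^ 2 = -(f x + g x) * d x := by simp [hd_def]; ring
    have h3 : -(f x + g x) * d x ≤ M' * d x := by
      apply mul_le_mul_of_nonneg_right _ hdx0
      calc -(f x + g x) ≤ |f x + g x| := neg_le_abs _
        _ ≤ M := by simpa using hM x hxab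
        _ ≤ M' := le_max_left _ _
    simpa using h1.trans (h2 ▸ h3)

lemma hasDerivAt_coth_barrier {k c t : ℝ} (hk : k ≠ 0) (h : t ≠ c) :
    HasDerivAt (fun s => k * (Real.cosh (k * (s - c)) / Real.sinh (k * (s - c))))
      (k ^ 2 - (k * (Real.cosh (k * (t - c)) / Real.sinh (k * (t - c)))) ^ 2) t := by
  have hu : HasDerivAt (fun s : ℝ => k * (s - c)) k t := by
    simpa using ((hasDerivAt_id t).sub_const c).const_mul k
  have h1 : HasDerivAt (fun s => Real.cosh (k * (s - c))) (Real.sinh (k * (t - c)) * k) t :=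
    (Real.hasDerivAt_cosh _).comp t hu
  have h2 : HasDerivAt (fun s => Real.sinh (k * (s - c))) (Real.cosh (k * (t - c)) * k) t :=
    (Real.hasDerivAt_sinh _).comp t hu
  have hs : Real.sinh (k * (t - c)) ≠ 0 :=
    Real.sinh_ne_zero.mpr (mul_ne_zero hk (sub_ne_zero.mpr h))
  have := (h1.div h2 hs).const_mul k
  refine this.congr_deriv ?_
  symm
  have hcs : Real.cosh (k * (t - c)) ^ 2 = Real.sinh (k * (t - c)) ^ 2 + 1 := Real.cosh_sq _
  field_simp

lemma coth_eq {u : ℝ} (hu : u ≠ 0) :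
    Real.cosh u / Real.sinh u = (Real.exp (2*u) + 1) / (Real.exp (2*u) - 1) := by
  have hs : Real.sinh u ≠ 0 := Real.sinh_ne_zero.mpr hu
  have he : Real.exp (2*u) - 1 ≠ 0 := by
    intro h
    have : Real.exp (2*u) = Real.exp 0 := by simpa using (by linarith : Real.exp (2*u) = 1)
    exact hu (by simpa using Real.exp_injective this)
  rw [Real.cosh_eq, Real.sinh_eq] at *
  have h2 : Real.exp (2*u) = Real.exp u * Real.exp u := by
    rw [two_mul, Real.exp_add]
  rw [h2] at he ⊢
  have hE : Real.exp u ≠ 0 := Real.exp_ne_zero u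
  rw [Real.exp_neg] at hs ⊢
  field_simp at hs ⊢

lemma coth_tendsto_atBot : Tendsto (fun u : ℝ => Real.cosh u / Real.sinh u) atBot (𝓝 (-1)) := by
  have h1 : Tendsto (fun u : ℝ => Real.exp (2*u)) atBot (𝓝 0) := by
    apply Real.tendsto_exp_atBot.comp
    exact Tendsto.const_mul_atBot two_pos tendsto_id
  have h2 : ContinuousAt (fun x : ℝ => (x + 1) / (x - 1)) 0 := by
    apply ContinuousAt.div (by fun_prop) (by fun_prop); norm_num
  have h3 := (h2.tendsto.comp h1)
  have h4 : ((0:ℝ) + 1) / ((0:ℝ) - 1) = -1 := by norm_num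
  rw [h4] at h3
  apply h3.congr'
  filter_upwards [eventually_lt_atBot (0:ℝ)] with u hu
  exact (coth_eq hu.ne).symm

lemma coth_blowup {k c : ℝ} (hk : 0 < k) :
    Tendsto (fun t => k * (Real.cosh (k*(t-c)) / Real.sinh (k*(t-c)))) (𝓝[>] c) atTop := by
  have hsinh : Tendsto (fun t => Real.sinh (k*(t-c))) (𝓝[>] c) (𝓝[>] 0) := by
    apply tendsto_nhdsWithin_of_tendsto_nhds_of_eventually_within
    · have hc : ContinuousAt (fun t => Real.sinh (k*(t-c))) c := by fun_prop
      have : Real.sinh (k*(c-c)) = 0 := by simp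
      simpa [this] using hc.tendsto.mono_left nhdsWithin_le_nhds
    · filter_upwards [self_mem_nhdsWithin] with t ht
      exact Real.sinh_pos_iff.mpr (by nlinarith [mem_Ioi.mp ht])
  have hmin : Tendsto (fun t => k * (Real.sinh (k*(t-c)))⁻¹) (𝓝[>] c) atTop :=
    (tendsto_inv_nhdsGT_zero.comp hsinh).const_mul_atTop hk
  apply tendsto_atTop_mono' _ _ hmin
  filter_upwards [self_mem_nhdsWithin] with t ht
  have hs : 0 < Real.sinh (k*(t-c)) := Real.sinh_pos_iff.mpr (by nlinarith [mem_Ioi.mp ht])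
  have hch : 1 ≤ Real.cosh (k*(t-c)) := Real.one_le_cosh _
  have h1 : (Real.sinh (k*(t-c)))⁻¹ ≤ Real.cosh (k*(t-c)) / Real.sinh (k*(t-c)) := by
    rw [inv_eq_one_div, div_le_div_iff₀ hs hs]
    nlinarith
  exact mul_le_mul_of_nonneg_left h1 hk.le

lemma tendsto_inv_zero_atBot' : Tendsto (fun x : ℝ => x⁻¹) (𝓝[<] (0:ℝ)) atBot := by
  have hneg : Tendsto (fun x : ℝ => -x) (𝓝[<] (0:ℝ)) (𝓝[>] (0:ℝ)) := by
    apply tendsto_nhdsWithin_of_tendsto_nhds_of_eventually_within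
    · simpa using (continuous_neg.tendsto (0:ℝ)).mono_left nhdsWithin_le_nhds
    · filter_upwards [self_mem_nhdsWithin] with x hx
      simpa using mem_Iio.mp hx
  have h1 : Tendsto (fun x : ℝ => ((-x)⁻¹)) (𝓝[<] (0:ℝ)) atTop :=
    tendsto_inv_nhdsGT_zero.comp hneg
  have h2 : Tendsto (fun x : ℝ => -((-x)⁻¹)) (𝓝[<] (0:ℝ)) atBot :=
    tendsto_neg_atTop_atBot.comp h1
  apply h2.congr
  intro x; rw [inv_neg, neg_neg]

lemma coth_blowdown {k c : ℝ} (hk : 0 < k) :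
    Tendsto (fun t => k * (Real.cosh (k*(t-c)) / Real.sinh (k*(t-c)))) (𝓝[<] c) atBot := by
  have hsinh : Tendsto (fun t => Real.sinh (k*(t-c))) (𝓝[<] c) (𝓝[<] 0) := by
    apply tendsto_nhdsWithin_of_tendsto_nhds_of_eventually_within
    · have hc : ContinuousAt (fun t => Real.sinh (k*(t-c))) c := by fun_prop
      have : Real.sinh (k*(c-c)) = 0 := by simp
      simpa [this] using hc.tendsto.mono_left nhdsWithin_le_nhds
    · filter_upwards [self_mem_nhdsWithin] with t ht
      exact Real.sinh_neg_iff.mpr (by nlinarith [mem_Iio.mp ht])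
  have hmaj : Tendsto (fun t => k * (Real.sinh (k*(t-c)))⁻¹) (𝓝[<] c) atBot := by
    have := tendsto_inv_zero_atBot'.comp hsinh
    exact Tendsto.const_mul_atBot hk this
  apply tendsto_atBot_mono' _ _ hmaj
  filter_upwards [self_mem_nhdsWithin] with t ht
  have hs : Real.sinh (k*(t-c)) < 0 := Real.sinh_neg_iff.mpr (by nlinarith [mem_Iio.mp ht])
  have hch : 1 ≤ Real.cosh (k*(t-c)) := Real.one_le_cosh _
  have h1 : Real.cosh (k*(t-c)) / Real.sinh (k*(t-c)) ≤ (Real.sinh (k*(t-c)))⁻¹ := by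
    have h2 : 0 ≤ (1 - Real.cosh (k*(t-c))) / Real.sinh (k*(t-c)) :=
      div_nonneg_of_nonpos (by linarith) hs.le
    rw [sub_div] at h2
    rw [inv_eq_one_div]
    linarith
  exact mul_le_mul_of_nonneg_left h1 hk.le

lemma selfadj_opNorm_le {E : Type*} [NormedAddCommGroup E] [InnerProductSpace ℝ E]
    (T : E →L[ℝ] E) (hsymm : ∀ x y : E, ⟪T x, y⟫_ℝ = ⟪x, T y⟫_ℝ) {C : ℝ} (hC : 0 ≤ C)
    (h : ∀ x : E, ‖x‖ = 1 → |⟪T x, x⟫_ℝ| ≤ C) : ‖T‖ ≤ C := by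
  have hq : ∀ x : E, |⟪T x, x⟫_ℝ| ≤ C * ‖x‖ ^ 2 := by
    intro x
    rcases eq_or_ne x 0 with rfl | hx
    · simp
    · have hnx : (0:ℝ) < ‖x‖ := norm_pos_iff.mpr hx
      have hu : ‖(‖x‖⁻¹ • x)‖ = 1 := by
        rw [norm_smul, norm_inv, norm_norm, inv_mul_cancel₀ hnx.ne']
      have hu2 := h _ hu
      rw [_root_.map_smul, inner_smul_left, inner_smul_right, starRingEnd_apply, star_trivial] at hu2
      have h1 : ‖x‖⁻¹ * ‖x‖⁻¹ * |⟪T x, x⟫_ℝ| ≤ C := by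
        have he : |‖x‖⁻¹ * (‖x‖⁻¹ * ⟪T x, x⟫_ℝ)| = ‖x‖⁻¹ * ‖x‖⁻¹ * |⟪T x, x⟫_ℝ| := by
          rw [abs_mul, abs_mul, abs_of_nonneg (inv_nonneg.mpr (norm_nonneg x))]; ring
        linarith [he ▸ hu2]
      have h2 : ‖x‖^2 * (‖x‖⁻¹ * ‖x‖⁻¹) = 1 := by rw [sq]; field_simp
      nlinarith [abs_nonneg (⟪T x, x⟫_ℝ), sq_nonneg ‖x‖]
  apply T.opNorm_le_bound hC
  intro x
  rcases eq_or_ne (T x) 0 with h0 | h0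
  · simp [h0]; positivity
  · have hTx : (0:ℝ) < ‖T x‖ := norm_pos_iff.mpr h0
    set y := (‖x‖ / ‖T x‖) • T x with hy
    have hyn : ‖y‖ = ‖x‖ := by
      rw [hy, norm_smul, norm_div, norm_norm, norm_norm, div_mul_cancel₀ _ hTx.ne']
    have key : 4 * ⟪T x, y⟫_ℝ = ⟪T (x + y), x + y⟫_ℝ - ⟪T (x - y), x - y⟫_ℝ := by
      rw [map_add, map_sub, inner_add_left, inner_add_right, inner_add_right,
        inner_sub_left, inner_sub_right, inner_sub_right]
      have h1 : ⟪T y, x⟫_ℝ = ⟪T x, y⟫_ℝ := by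
        rw [hsymm y x, real_inner_comm]
      ring_nf
      rw [h1]; ring
    have hb : ⟪T (x + y), x + y⟫_ℝ - ⟪T (x - y), x - y⟫_ℝ ≤ C * ‖x + y‖^2 + C * ‖x - y‖^2 := by
      have h1 := (abs_le.mp (hq (x + y))).2
      have h2 := (abs_le.mp (hq (x - y))).1
      linarith
    have hpar : ‖x + y‖^2 + ‖x - y‖^2 = 2 * (‖x‖^2 + ‖y‖^2) := by
      have := parallelogram_law_with_norm ℝ x y
      linarith
    have hip : ⟪T x, y⟫_ℝ = (‖x‖ / ‖T x‖) * ‖T x‖^2 := by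
      rw [hy, inner_smul_right, real_inner_self_eq_norm_sq]
    have hfin : 4 * ((‖x‖ / ‖T x‖) * ‖T x‖^2) ≤ C * (2 * (‖x‖^2 + ‖x‖^2)) := by
      rw [← hip, ← hyn]
      calc 4 * ⟪T x, y⟫_ℝ ≤ C * ‖x + y‖^2 + C * ‖x - y‖^2 := by rw [key]; exact hb
        _ = C * (‖x + y‖^2 + ‖x - y‖^2) := by ring
        _ = C * (2 * (‖x‖^2 + ‖y‖^2)) := by rw [hpar]
        _ = C * (2 * (‖y‖^2 + ‖y‖^2)) := by rw [hyn]
    have h4 : (‖x‖ / ‖T x‖) * ‖T x‖^2 = ‖x‖ * ‖T x‖ := by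
      field_simp
    rw [h4] at hfin
    have hx : 0 < ‖x‖ := norm_pos_iff.mpr (fun h => h0 (by simp [h]))
    nlinarith [hx]

end Aux

/-- Hopf–Green Riccati comparison (matrix case): a symmetric solution of
`V' + V² + K = 0` on `(0,∞)` with `K(t) ≥ −k²·1` satisfies `‖V(t)‖₂ ≤ k coth(kt)`. -/
theorem riccati_bound {m : ℕ}
    (K V : ℝ → Matrix (Fin m) (Fin m) ℝ) (k : ℝ) (hk : 0 < k)
    (hKsymm : ∀ t, (K t)ᵀ = K t)
    (hKlow : ∀ t > (0 : ℝ), (K t + k ^ 2 • (1 : Matrix (Fin m) (Fin m) ℝ)).PosSemidef)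
    (hVsymm : ∀ t > (0 : ℝ), (V t)ᵀ = V t)
    (hV : ∀ t > (0 : ℝ), HasDerivAt V (-(V t * V t + K t)) t) :
    ∀ t > (0 : ℝ),
      opNorm (V t) ≤ k * (Real.cosh (k * t) / Real.sinh (k * t)) := by
  intro t₀ ht₀
  set C := k * (Real.cosh (k * t₀) / Real.sinh (k * t₀)) with hC_def
  have hsinh0 : 0 < Real.sinh (k * t₀) := Real.sinh_pos_iff.mpr (by positivity)
  have hC1 : k ≤ C := by
    rw [hC_def]
    have : (1:ℝ) ≤ Real.cosh (k * t₀) / Real.sinh (k * t₀) := by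
      rw [le_div_iff₀ hsinh0, one_mul]
      exact (Real.sinh_lt_cosh _).le
    nlinarith
  have hCpos : 0 < C := lt_of_lt_of_le hk hC1
  -- scalar bound for unit vectors
  have main : ∀ x : Fin m → ℝ, (∑ i, x i ^ 2) = 1 →
      |dotProduct x ((V t₀).mulVec x)| ≤ C := by
    intro x hx1
    set L : Matrix (Fin m) (Fin m) ℝ →ₗ[ℝ] ℝ :=
      { toFun := fun M => dotProduct x (M.mulVec x)
        map_add' := fun A B => by
          simp only [Matrix.add_mulVec, dotProduct_add]
        map_smul' := fun c A => by
          simp only [Matrix.smul_mulVec, dotProduct_smul, RingHom.id_apply] } with hL_def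
    set f : ℝ → ℝ := fun t => dotProduct x ((V t).mulVec x) with hf_def
    set f' : ℝ → ℝ := fun t => dotProduct x ((-(V t * V t + K t)).mulVec x) with hf'_def
    have hfd : ∀ t ∈ Ioi (0:ℝ), HasDerivAt f (f' t) t := by
      intro t ht
      exact (L.toContinuousLinearMap.hasFDerivAt (x := V t)).comp_hasDerivAt t (hV t ht)
    have hfle : ∀ t ∈ Ioi (0:ℝ), f' t ≤ k ^ 2 - f t ^ 2 := by
      intro t ht
      have hsV := hVsymm t ht
      have e1 : f' t = -(dotProduct ((V t).mulVec x) ((V t).mulVec x))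
          - dotProduct x ((K t).mulVec x) := by
        rw [hf'_def]
        show dotProduct x ((-(V t * V t + K t)).mulVec x) = _
        rw [Matrix.neg_mulVec, dotProduct_neg, Matrix.add_mulVec, dotProduct_add]
        have e2 : dotProduct x ((V t * V t).mulVec x)
            = dotProduct ((V t).mulVec x) ((V t).mulVec x) := by
          rw [← Matrix.mulVec_mulVec, dotProduct_mulVec]
          congr 1
          rw [← Matrix.mulVec_transpose, hsV]
        rw [e2]; ring
      have hcs : f t ^ 2 ≤ dotProduct ((V t).mulVec x) ((V t).mulVec x) := by
        have h2 := Finset.sum_mul_sq_le_sq_mul_sq Finset.univ x ((V t).mulVec x)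
        rw [hx1, one_mul] at h2
        have e3 : dotProduct ((V t).mulVec x) ((V t).mulVec x)
            = ∑ i, ((V t).mulVec x) i ^ 2 := by simp [dotProduct, sq]
        have e4 : f t = ∑ i, x i * ((V t).mulVec x) i := rfl
        rw [e4, e3]; exact h2
      have hKb : -(k ^ 2) ≤ dotProduct x ((K t).mulVec x) := by
        have h3 := (hKlow t ht).dotProduct_mulVec_nonneg x
        have hst : star x = x := by funext i; simp
        rw [hst, Matrix.add_mulVec, dotProduct_add, Matrix.smul_mulVec,
          Matrix.one_mulVec, dotProduct_smul] at h3
        have hxx : dotProduct x x = 1 := by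
          have : dotProduct x x = ∑ i, x i ^ 2 := by simp [dotProduct, sq]
          rw [this, hx1]
        rw [hxx, smul_eq_mul, mul_one] at h3
        linarith
      rw [e1]; nlinarith
    -- upper bound
    have hub : f t₀ ≤ C := by
      by_contra hcon
      push_neg at hcon
      have hcont : ContinuousAt
          (fun c : ℝ => k * (Real.cosh (k*(t₀ - c)) / Real.sinh (k*(t₀ - c)))) 0 := by
        apply ContinuousAt.mul continuousAt_const
        apply ContinuousAt.div (by fun_prop) (by fun_prop)
        simpa using hsinh0.ne'
      have hval : k * (Real.cosh (k*(t₀ - 0)) / Real.sinh (k*(t₀ - 0))) = C := by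
        rw [hC_def]; norm_num
      have hev : ∀ᶠ c in 𝓝[>] (0:ℝ),
          k * (Real.cosh (k*(t₀ - c)) / Real.sinh (k*(t₀ - c))) < f t₀ := by
        apply Filter.Eventually.filter_mono nhdsWithin_le_nhds
        have h5 := hcont.tendsto
        rw [hval] at h5
        exact h5.eventually_lt_const hcon
      obtain ⟨c, hclt, hcmem⟩ := (hev.and (Ioo_mem_nhdsGT_of_mem ⟨le_rfl, ht₀⟩)).exists
      set g : ℝ → ℝ := fun s => k * (Real.cosh (k*(s - c)) / Real.sinh (k*(s - c))) with hg_def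
      have hgt₀ : g t₀ < f t₀ := hclt
      have hfc2 : ContinuousOn f (Icc c t₀) := fun s hs =>
        ((hfd s (lt_of_lt_of_le hcmem.1 hs.1)).continuousAt).continuousWithinAt
      obtain ⟨B, hB⟩ := isCompact_Icc.exists_bound_of_continuousOn hfc2
      have hev2 : ∀ᶠ s in 𝓝[>] c, B < g s := (coth_blowup hk).eventually_gt_atTop B
      obtain ⟨a, hag, haIoo⟩ := (hev2.and (Ioo_mem_nhdsGT_of_mem ⟨le_rfl, hcmem.2⟩)).exists
      have hcomp : f t₀ ≤ g t₀ := by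
        apply riccati_scalar_comp (k := k) (f' := f') (g' := fun s => k ^ 2 - g s ^ 2)
          haIoo.2.le
        · intro s hs
          exact hfd s (lt_of_lt_of_le (hcmem.1.trans haIoo.1) hs.1)
        · intro s hs
          exact hasDerivAt_coth_barrier hk.ne' (ne_of_gt (lt_of_lt_of_le haIoo.1 hs.1))
        · intro s hs
          exact hfle s (lt_of_lt_of_le (hcmem.1.trans haIoo.1) hs.1)
        · intro s _; exact le_refl _
        · have hfa : f a ≤ B := by
            have := hB a ⟨haIoo.1.le, haIoo.2.le⟩
            exact (le_abs_self _).trans (by simpa using this)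
          linarith
      linarith
    -- lower bound
    have hlb : -k ≤ f t₀ := by
      by_contra hcon
      push_neg at hcon
      have hu : Tendsto (fun c : ℝ => k*(t₀ - c)) atTop atBot := by
        apply Tendsto.const_mul_atBot hk
        have h8 := tendsto_neg_atTop_atBot.comp
          (tendsto_atTop_add_const_right atTop (-t₀) (tendsto_id (α := ℝ)))
        exact h8.congr fun c => by simp [Function.comp]; ring
      have htends : Tendsto
          (fun c : ℝ => k * (Real.cosh (k*(t₀ - c)) / Real.sinh (k*(t₀ - c)))) atTop (𝓝 (-k)) := by
        have h6 := (coth_tendsto_atBot.comp hu).const_mul k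
        simpa using h6
      have hev : ∀ᶠ c in atTop,
          f t₀ < k * (Real.cosh (k*(t₀ - c)) / Real.sinh (k*(t₀ - c))) :=
        htends.eventually_const_lt (by linarith : f t₀ < -k)
      obtain ⟨c, hgc, hct⟩ := (hev.and (eventually_gt_atTop t₀)).exists
      set g : ℝ → ℝ := fun s => k * (Real.cosh (k*(s - c)) / Real.sinh (k*(s - c))) with hg_def
      have hfc2 : ContinuousOn f (Icc t₀ c) := fun s hs =>
        ((hfd s (lt_of_lt_of_le ht₀ hs.1)).continuousAt).continuousWithinAt
      obtain ⟨B, hB⟩ := isCompact_Icc.exists_bound_of_continuousOn hfc2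
      have hev2 : ∀ᶠ s in 𝓝[<] c, g s < -B := (coth_blowdown hk).eventually_lt_atBot (-B)
      obtain ⟨b', hb'g, hb'Ioo⟩ := (hev2.and (Ioo_mem_nhdsLT_of_mem ⟨hct, le_rfl⟩)).exists
      have hcomp : f b' ≤ g b' := by
        apply riccati_scalar_comp (k := k) (f' := f') (g' := fun s => k ^ 2 - g s ^ 2)
          hb'Ioo.1.le
        · intro s hs
          exact hfd s (lt_of_lt_of_le ht₀ hs.1)
        · intro s hs
          exact hasDerivAt_coth_barrier hk.ne' (ne_of_lt (lt_of_le_of_lt hs.2 hb'Ioo.2))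
        · intro s hs
          exact hfle s (lt_of_lt_of_le ht₀ hs.1)
        · intro s _; exact le_refl _
        · exact hgc.le
      have hfb' : -B ≤ f b' := by
        have := hB b' ⟨hb'Ioo.1.le, hb'Ioo.2.le⟩
        have h7 : |f b'| ≤ B := by simpa using this
        linarith [(abs_le.mp h7).1]
      linarith
    exact abs_le.mpr ⟨by linarith, hub⟩
  -- assemble
  have hH : (V t₀).IsHermitian := by
    have h := hVsymm t₀ ht₀
    show (V t₀)ᴴ = V t₀
    ext i j
    simp only [Matrix.conjTranspose_apply, star_trivial]
    exact (congrFun (congrFun h j) i).symm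
  have hsymL := Matrix.isHermitian_iff_isSymmetric.mp hH
  have hcoe : ∀ w, Matrix.toEuclideanCLM (𝕜 := ℝ) (V t₀) w = Matrix.toEuclideanLin (V t₀) w := by
    intro w
    rw [← Matrix.coe_toEuclideanCLM_eq_toEuclideanLin]
    rfl
  show ‖Matrix.toEuclideanCLM (𝕜 := ℝ) (V t₀)‖ ≤ C
  apply selfadj_opNorm_le _ _ hCpos.le _
  · intro u v
    rw [hcoe, hcoe]
    exact hsymL u v
  · intro u hu
    have hx1 : ∑ i, (u i) ^ 2 = 1 := by
      have h2 := EuclideanSpace.norm_eq u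
      rw [hu] at h2
      have h3 := Real.sqrt_eq_one.mp h2.symm
      simpa [Real.norm_eq_abs, sq_abs] using h3
    have key := main (fun i => u i) hx1
    have hTu : ∀ i, (Matrix.toEuclideanCLM (𝕜 := ℝ) (V t₀)) u i
        = (V t₀).mulVec (fun j => u j) i := by
      intro i
      rw [hcoe, Matrix.toEuclideanLin_apply]
    have h5 : ⟪(Matrix.toEuclideanCLM (𝕜 := ℝ) (V t₀)) u, u⟫_ℝ
        = dotProduct (fun i => u i) ((V t₀).mulVec (fun j => u j)) := by
      rw [PiLp.inner_apply, dotProduct_comm]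
      apply Finset.sum_congr rfl
      intro i _
      rw [RCLike.inner_apply, hTu i]
      simp [dotProduct, mul_comm]
    rw [h5]
    exact key
end
end

section
/- Let V : (0, ∞) → ℝ be a differentiable solution of the scalar Riccati equation v' + v² + κ = 0 on (0,∞), where κ : (0,∞) → ℝ is continuous with κ(t) ≥ −k² for all t. Then |v(t)| ≤ k·coth(k t) for all t > 0. -/
open Real Set Filter Topology

noncomputable def cth (x : ℝ) : ℝ := Real.cosh x / Real.sinh x

lemma one_lt_cth {x : ℝ} (hx : 0 < x) : 1 < cth x :=
  (one_lt_div (Real.sinh_pos_iff.2 hx)).2 (Real.sinh_lt_cosh x)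

lemma cth_anti {x y : ℝ} (hx : 0 < x) (hxy : x ≤ y) : cth y ≤ cth x := by
  have hy : 0 < y := lt_of_lt_of_le hx hxy
  rw [cth, cth, div_le_div_iff₀ (Real.sinh_pos_iff.2 hy) (Real.sinh_pos_iff.2 hx)]
  have h : Real.sinh y * Real.cosh x - Real.cosh y * Real.sinh x = Real.sinh (y - x) :=
    (Real.sinh_sub y x).symm
  nlinarith [Real.sinh_nonneg_iff.2 (sub_nonneg.2 hxy), Real.sinh_pos_iff.2 hx, Real.sinh_pos_iff.2 hy]

lemma cth_surj {r : ℝ} (hr : 1 < r) :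
    ∃ y : ℝ, 0 < y ∧ cth y = r := by
  have h1 : (0:ℝ) < r - 1 := by linarith
  have h2 : (1:ℝ) < (r + 1) / (r - 1) := (one_lt_div h1).2 (by linarith)
  have h3 : (0:ℝ) < (r + 1) / (r - 1) := by linarith
  refine ⟨Real.log ((r + 1) / (r - 1)) / 2, by have := Real.log_pos h2; linarith, ?_⟩
  set y := Real.log ((r + 1) / (r - 1)) / 2 with hy
  have hypos : 0 < y := by have := Real.log_pos h2; rw [hy]; linarith
  have he : Real.exp (2 * y) = (r + 1) / (r - 1) := by
    rw [hy]; rw [show 2 * (Real.log ((r + 1) / (r - 1)) / 2) = Real.log ((r+1)/(r-1)) by ring]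
    exact Real.exp_log h3
  have hexp : Real.exp (2 * y) = Real.exp y * Real.exp y := by
    rw [← Real.exp_add]; ring_nf
  have hsinh : 0 < Real.sinh y := Real.sinh_pos_iff.2 hypos
  rw [cth, div_eq_iff (ne_of_gt hsinh), Real.cosh_eq, Real.sinh_eq]
  have hne : Real.exp y ≠ 0 := (Real.exp_pos y).ne'
  have hinv : Real.exp (-y) = (Real.exp y)⁻¹ := Real.exp_neg y
  rw [hexp] at he
  have hE : Real.exp y * Real.exp y * (r - 1) = r + 1 := by
    field_simp at he; linarith
  field_simp [hinv]
  rw [hinv]; field_simp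
  nlinarith [hE]

lemma barrier_hasDerivAt {k d : ℝ} (hk : 0 < k) {t : ℝ} (h : t < d) :
    HasDerivAt (fun t => -(k * cth (k * (d - t))))
      (k ^ 2 - (-(k * cth (k * (d - t)))) ^ 2) t := by
  have harg : HasDerivAt (fun t : ℝ => k * (d - t)) (-k) t := by
    have h0 : HasDerivAt (fun t : ℝ => d - t) (-1) t := (hasDerivAt_id t).const_sub d
    have := h0.const_mul k
    simpa using this
  have hs : 0 < Real.sinh (k * (d - t)) := Real.sinh_pos_iff.2 (by nlinarith)
  have hcosh : HasDerivAt (fun t : ℝ => Real.cosh (k * (d - t)))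
      (Real.sinh (k * (d - t)) * (-k)) t := (Real.hasDerivAt_cosh _).comp t harg
  have hsinh : HasDerivAt (fun t : ℝ => Real.sinh (k * (d - t)))
      (Real.cosh (k * (d - t)) * (-k)) t := (Real.hasDerivAt_sinh _).comp t harg
  have hdiv := hcosh.div hsinh hs.ne'
  have hfinal := (hdiv.const_mul k).neg
  refine hfinal.congr_deriv ?_
  have hone : Real.cosh (k*(d-t)) ^ 2 - Real.sinh (k*(d-t)) ^ 2 = 1 :=
    Real.cosh_sq_sub_sinh_sq _
  unfold cth
  field_simp
  nlinarith [hone]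

lemma riccati_compare {f f' B : ℝ → ℝ} {k a b : ℝ}
    (hf : ∀ t ∈ Set.Icc a b, HasDerivAt f (f' t) t)
    (hfle : ∀ t ∈ Set.Icc a b, f' t ≤ k ^ 2 - f t ^ 2)
    (hB : ∀ t ∈ Set.Icc a b, HasDerivAt B (k ^ 2 - B t ^ 2) t)
    (hfa : f a ≤ B a) : ∀ t ∈ Set.Icc a b, f t ≤ B t := by
  rcases lt_or_ge b a with hab | hab
  · intro t ht; exact absurd (ht.1.trans ht.2) (not_le.2 hab)
  have hBc : ContinuousOn B (Icc a b) := fun t ht => (hB t ht).continuousAt.continuousWithinAt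
  have hfc : ContinuousOn f (Icc a b) := fun t ht => (hf t ht).continuousAt.continuousWithinAt
  obtain ⟨m, hm⟩ : ∃ m, ∀ t ∈ Icc a b, m ≤ B t := by
    obtain ⟨m, hm⟩ := (isCompact_Icc.image_of_continuousOn hBc).bddBelow
    exact ⟨m, fun t ht => hm (Set.mem_image_of_mem B ht)⟩
  set L : ℝ := 1 - 2 * min m 0 with hL
  have hL1 : 1 ≤ L := by have : min m 0 ≤ 0 := min_le_right _ _; simp [hL]; linarith
  have hL2 : ∀ t ∈ Icc a b, 0 < L + 2 * B t := by
    intro t ht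
    have h1 : min m 0 ≤ m := min_le_left _ _
    have := hm t ht
    simp [hL]; linarith
  have key : ∀ ε : ℝ, 0 < ε → ∀ t ∈ Icc a b, f t ≤ B t + ε * Real.exp (L * (t - a)) := by
    intro ε hε
    have hB'w : ∀ x ∈ Ico a b,
        HasDerivWithinAt (fun t => B t + ε * Real.exp (L * (t - a)))
          ((k ^ 2 - B x ^ 2) + ε * (Real.exp (L * (x - a)) * L)) (Ici x) x := by
      intro x hx
      have h1 : HasDerivAt (fun t : ℝ => L * (t - a)) L x := by
        simpa using ((hasDerivAt_id x).sub_const a).const_mul L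
      have h2 : HasDerivAt (fun t : ℝ => Real.exp (L * (t - a)))
          (Real.exp (L * (x - a)) * L) x := (Real.hasDerivAt_exp _).comp x h1
      exact ((hB x (Ico_subset_Icc_self hx)).add (h2.const_mul ε)).hasDerivWithinAt
    have hcont : ContinuousOn (fun t => B t + ε * Real.exp (L * (t - a))) (Icc a b) := by
      fun_prop
    have hbound : ∀ x ∈ Ico a b, f x = B x + ε * Real.exp (L * (x - a)) →
        f' x < (k ^ 2 - B x ^ 2) + ε * (Real.exp (L * (x - a)) * L) := by
      intro x hx hfx
      have h1 := hfle x (Ico_subset_Icc_self hx)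
      have h2 := hL2 x (Ico_subset_Icc_self hx)
      have h3 : (0:ℝ) < Real.exp (L * (x - a)) := Real.exp_pos _
      have h4 : 0 < ε * Real.exp (L * (x - a)) *
          (L + 2 * B x + ε * Real.exp (L * (x - a))) := by
        apply mul_pos (mul_pos hε h3); nlinarith
      rw [hfx] at h1
      nlinarith [h4]
    have ha0 : f a ≤ B a + ε * Real.exp (L * (a - a)) := by
      simp only [sub_self, mul_zero, Real.exp_zero, mul_one]; linarith
    exact fun t ht => image_le_of_deriv_right_lt_deriv_boundary' hfc
      (fun x hx => (hf x (Ico_subset_Icc_self hx)).hasDerivWithinAt) ha0 hcont hB'w hbound ht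
  intro t ht
  apply le_of_forall_pos_le_add
  intro ε' hε'
  have hexp : (0:ℝ) < Real.exp (L * (b - a)) := Real.exp_pos _
  have hε : 0 < ε' / Real.exp (L * (b - a)) := div_pos hε' hexp
  have h1 := key _ hε t ht
  have h2 : Real.exp (L * (t - a)) ≤ Real.exp (L * (b - a)) := by
    apply Real.exp_le_exp.2
    have : 0 < L := lt_of_lt_of_le one_pos hL1
    nlinarith [ht.2]
  have h3 : ε' / Real.exp (L * (b - a)) * Real.exp (L * (t - a)) ≤ ε' := by
    rw [div_mul_eq_mul_div, div_le_iff₀ hexp]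
    nlinarith [Real.exp_pos (L * (t - a))]
  linarith

lemma blowdown {u : ℝ → ℝ} {k c e : ℝ} (hk : 0 < k) (hu : ContinuousAt u c) (hec : e < c)
    (h : ∀ b ∈ Set.Ioo e c, u b ≤ -(k * cth (k * (c - b)))) : False := by
  have l1 : Tendsto (fun b => k * (c - b)) (𝓝[<] c) (𝓝[>] 0) := by
    rw [tendsto_nhdsWithin_iff]
    constructor
    · have h0 : Tendsto (fun b : ℝ => k * (c - b)) (𝓝 c) (𝓝 (k * (c - c))) := by
        exact tendsto_const_nhds.mul (tendsto_const_nhds.sub tendsto_id)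
      simpa using h0.mono_left nhdsWithin_le_nhds
    · filter_upwards [self_mem_nhdsWithin] with b hb
      have hb' : b < c := hb
      exact mem_Ioi.2 (by nlinarith)
  have l2 : Tendsto (fun b => Real.sinh (k * (c - b))) (𝓝[<] c) (𝓝[>] 0) := by
    rw [tendsto_nhdsWithin_iff]
    constructor
    · have := (Real.continuous_sinh.tendsto 0).comp (l1.mono_right nhdsWithin_le_nhds)
      simpa [Function.comp_def] using this
    · filter_upwards [l1 self_mem_nhdsWithin] with b hb
      exact mem_Ioi.2 (Real.sinh_pos_iff.2 hb)
  have l3 : Tendsto (fun b => (Real.sinh (k * (c - b)))⁻¹) (𝓝[<] c) atTop :=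
    tendsto_inv_nhdsGT_zero.comp l2
  have l4 : Tendsto (fun b => Real.cosh (k * (c - b)) * (Real.sinh (k * (c - b)))⁻¹)
      (𝓝[<] c) atTop := by
    apply Filter.Tendsto.pos_mul_atTop one_pos _ l3
    have := (Real.continuous_cosh.tendsto 0).comp (l1.mono_right nhdsWithin_le_nhds)
    simpa [Function.comp_def] using this
  have l5 : Tendsto (fun b => -(k * cth (k * (c - b)))) (𝓝[<] c) atBot := by
    have hkneg : -k < 0 := by linarith
    have hconst : Tendsto (fun _ : ℝ => -k) (𝓝[<] c) (𝓝 (-k)) := tendsto_const_nhds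
    have := Filter.Tendsto.neg_mul_atTop hkneg hconst l4
    simpa [cth, div_eq_mul_inv, neg_mul] using this
  have l6 : Tendsto u (𝓝[<] c) (𝓝 (u c)) := hu.continuousWithinAt
  have l7 := l5.eventually (eventually_le_atBot (u c - 1))
  have l8 := l6.eventually (eventually_gt_nhds (show u c - 1 < u c by linarith))
  have l9 : Set.Ioo e c ∈ 𝓝[<] c := Ioo_mem_nhdsLT_of_mem ⟨hec, le_refl c⟩
  obtain ⟨b, hb1, hb2, hb3⟩ := (l7.and (l8.and (eventually_of_mem l9 fun x hx => hx))).exists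
  have := h b hb3
  linarith
/-- Hopf–Green Riccati comparison (scalar case): a solution of `v' + v² + κ = 0`
on `(0,∞)` with `κ(t) ≥ −k²` satisfies `|v(t)| ≤ k coth(kt)`. -/
theorem scalar_riccati_bound
    (v κ : ℝ → ℝ) (k : ℝ) (hk : 0 < k)
    (hκ : ContinuousOn κ (Set.Ioi 0))
    (hκlow : ∀ t > (0 : ℝ), -k ^ 2 ≤ κ t)
    (hv : ∀ t > (0 : ℝ), HasDerivAt v (-(v t ^ 2 + κ t)) t) :
    ∀ t > (0 : ℝ), |v t| ≤ k * (Real.cosh (k * t) / Real.sinh (k * t)) := by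
  intro t₀ ht₀
  have hkt₀ : 0 < k * t₀ := mul_pos hk ht₀
  have hcth1 : 1 < cth (k * t₀) := one_lt_cth hkt₀
  show |v t₀| ≤ k * cth (k * t₀)
  rw [abs_le]
  constructor
  · -- lower bound
    by_contra hlt
    push_neg at hlt
    have hr : cth (k * t₀) < -v t₀ / k := by
      rw [lt_div_iff₀ hk]; nlinarith
    obtain ⟨y₀, hy₀pos, hy₀⟩ := cth_surj (lt_trans hcth1 hr)
    set s := y₀ / k with hs
    have hspos : 0 < s := div_pos hy₀pos hk
    have hks : k * s = y₀ := by rw [hs]; field_simp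
    set c := t₀ + s with hc
    have hct₀ : t₀ < c := by linarith
    have hcpos : 0 < c := by linarith
    have claim : ∀ b ∈ Set.Ioo t₀ c, v b ≤ -(k * cth (k * (c - b))) := by
      intro b hb
      have h1 : ∀ t ∈ Set.Icc t₀ b, HasDerivAt v (-(v t ^ 2 + κ t)) t :=
        fun t ht => hv t (lt_of_lt_of_le ht₀ ht.1)
      have h2 : ∀ t ∈ Set.Icc t₀ b, -(v t ^ 2 + κ t) ≤ k ^ 2 - v t ^ 2 := by
        intro t ht
        have := hκlow t (lt_of_lt_of_le ht₀ ht.1)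
        linarith
      have h3 : ∀ t ∈ Set.Icc t₀ b, HasDerivAt (fun t => -(k * cth (k * (c - t))))
          (k ^ 2 - (-(k * cth (k * (c - t)))) ^ 2) t := by
        intro t ht
        exact barrier_hasDerivAt hk (by linarith [ht.2, hb.2] : t < c)
      have hfa : v t₀ ≤ -(k * cth (k * (c - t₀))) := by
        have e2 : k * (c - t₀) = y₀ := by rw [hc, ← hks]; ring
        rw [e2, hy₀]
        have : k * (-v t₀ / k) = -v t₀ := mul_div_cancel₀ _ hk.ne'
        rw [this, neg_neg]
      exact riccati_compare h1 h2 h3 hfa b ⟨hb.1.le, le_refl b⟩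
    exact blowdown hk (hv c hcpos).continuousAt hct₀ claim
  · -- upper bound
    by_contra hlt
    push_neg at hlt
    have hr : cth (k * t₀) < v t₀ / k := by
      rw [lt_div_iff₀ hk]; nlinarith
    obtain ⟨y₀, hy₀pos, hy₀⟩ := cth_surj (lt_trans hcth1 hr)
    set s := y₀ / k with hs
    have hspos : 0 < s := div_pos hy₀pos hk
    have hks : k * s = y₀ := by rw [hs]; field_simp
    have hst₀ : s < t₀ := by
      by_contra hst
      push_neg at hst
      have := cth_anti hkt₀ (by nlinarith : k * t₀ ≤ k * s)
      rw [hks, hy₀] at this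
      linarith
    set c := t₀ - s with hc
    have hcpos : 0 < c := by linarith
    have hct₀ : c < t₀ := by linarith
    have claim : ∀ a ∈ Set.Ioo c t₀, k * cth (k * (a - c)) ≤ v a := by
      intro a ha
      set d := a + t₀ - c with hd
      have h1 : ∀ t ∈ Set.Icc a t₀, HasDerivAt (fun t => -v (a + t₀ - t))
          (-(v (a + t₀ - t) ^ 2 + κ (a + t₀ - t))) t := by
        intro t ht
        have hσ : (0:ℝ) < a + t₀ - t := by
          have := ht.2; have := ha.1; linarith
        have hinner : HasDerivAt (fun t : ℝ => a + t₀ - t) (-1) t :=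
          (hasDerivAt_id t).const_sub (a + t₀)
        have := ((hv _ hσ).comp t hinner).neg
        refine this.congr_deriv ?_
        ring
      have h2 : ∀ t ∈ Set.Icc a t₀, -(v (a + t₀ - t) ^ 2 + κ (a + t₀ - t)) ≤
          k ^ 2 - (-v (a + t₀ - t)) ^ 2 := by
        intro t ht
        have hσ : (0:ℝ) < a + t₀ - t := by
          have := ht.2; have := ha.1; linarith
        have := hκlow _ hσ
        nlinarith
      have h3 : ∀ t ∈ Set.Icc a t₀, HasDerivAt (fun t => -(k * cth (k * (d - t))))
          (k ^ 2 - (-(k * cth (k * (d - t)))) ^ 2) t := by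
        intro t ht
        have : t < d := by rw [hd]; have := ht.2; have := ha.1; linarith
        exact barrier_hasDerivAt hk this
      have hfa : -v (a + t₀ - a) ≤ -(k * cth (k * (d - a))) := by
        have e1 : a + t₀ - a = t₀ := by ring
        have e2 : k * (d - a) = y₀ := by
          rw [hd, hc]; rw [mul_comm] at hks; rw [← hks]; ring
        rw [e1, e2, hy₀]
        have : k * (v t₀ / k) = v t₀ := mul_div_cancel₀ _ hk.ne'
        rw [this]
      have hcomp := riccati_compare (f := fun t => -v (a + t₀ - t)) h1 h2 h3 hfa t₀
        ⟨ha.2.le, le_refl t₀⟩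
      have hcomp' : -v (a + t₀ - t₀) ≤ -(k * cth (k * (d - t₀))) := hcomp
      have e3 : a + t₀ - t₀ = a := by ring
      have e4 : d - t₀ = a - c := by rw [hd]; ring
      rw [e3, e4] at hcomp'
      rename' hcomp' => hcomp
      linarith
    -- reflect and apply blowdown
    have claim2 : ∀ b ∈ Set.Ioo (2 * c - t₀) c, -v (2 * c - b) ≤
        -(k * cth (k * (c - b))) := by
      intro b hb
      have ha : 2 * c - b ∈ Set.Ioo c t₀ := ⟨by linarith [hb.2], by linarith [hb.1]⟩
      have := claim _ ha
      have e5 : 2 * c - b - c = c - b := by ring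
      rw [e5] at this
      linarith
    have hu : ContinuousAt (fun b => -v (2 * c - b)) c := by
      have hinner : ContinuousAt (fun b : ℝ => 2 * c - b) c :=
        (continuous_const.sub continuous_id).continuousAt
      have houter : ContinuousAt (fun x => -v x) ((fun b : ℝ => 2 * c - b) c) := by
        have e6 : (2 * c - c) = c := by ring
        show ContinuousAt (fun x => -v x) (2 * c - c)
        rw [e6]
        exact (hv c hcpos).continuousAt.neg
      exact houter.comp hinner
    exact blowdown (u := fun b => -v (2 * c - b)) hk hu (by linarith) claim2
end

section
/- Let A : ℝ → Matrix (Fin m) (Fin m) ℝ solve the Jacobi equation A'' + K·A = 0 with K(t) symmetric, A(0) = 0, A'(0) = I, and suppose A(t) is invertible for all t ≠ 0. Then U(t) := A'(t)·A(t)⁻¹ is a symmetric solution of the Riccati equation U' + U² + K = 0 on (0, ∞). -/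
open Matrix MeasureTheory

noncomputable section

attribute [local instance] Matrix.normedAddCommGroup Matrix.normedSpace

lemma hasDerivAt_matrix {m : ℕ} {f : ℝ → Matrix (Fin m) (Fin m) ℝ}
    {f' : Matrix (Fin m) (Fin m) ℝ} {t : ℝ} :
    HasDerivAt f f' t ↔ ∀ i j, HasDerivAt (fun s => f s i j) (f' i j) t := by
  exact hasDerivAt_pi.trans (forall_congr' fun i => hasDerivAt_pi)

lemma HasDerivAt.matrix_mul {m : ℕ} {f g : ℝ → Matrix (Fin m) (Fin m) ℝ}
    {f' g' : Matrix (Fin m) (Fin m) ℝ} {t : ℝ}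
    (hf : HasDerivAt f f' t) (hg : HasDerivAt g g' t) :
    HasDerivAt (fun s => f s * g s) (f' * g t + f t * g') t := by
  rw [hasDerivAt_matrix] at hf hg ⊢
  intro i j
  simp only [Matrix.mul_apply, Matrix.add_apply]
  rw [← Finset.sum_add_distrib]
  exact HasDerivAt.fun_sum fun k _ => (hf i k).mul (hg k j)

/-- If `A` solves `A'' + K A = 0` with `K` symmetric, `A(0) = 0`, `A'(0) = 1`, and `A(t)`
is invertible for `t ≠ 0`, then `U = A' A⁻¹` is a symmetric solution of the Riccati
equation `U' + U² + K = 0` on `(0, ∞)`. -/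
theorem U_riccati {m : ℕ}
    (K A A' : ℝ → Matrix (Fin m) (Fin m) ℝ)
    (hK : Continuous K)
    (hKsymm : ∀ t, (K t)ᵀ = K t)
    (hA : ∀ t, HasDerivAt A (A' t) t)
    (hA' : ∀ t, HasDerivAt A' (-(K t * A t)) t)
    (hA0 : A 0 = 0) (hA'0 : A' 0 = 1)
    (hinv : ∀ t ≠ (0 : ℝ), IsUnit (A t)) :
    ∀ t > (0 : ℝ),
      HasDerivAt (fun s => A' s * (A s)⁻¹)
        (-((A' t * (A t)⁻¹) * (A' t * (A t)⁻¹) + K t)) t ∧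
      (A' t * (A t)⁻¹)ᵀ = A' t * (A t)⁻¹ := by
  intro t ht
  have htne : t ≠ 0 := ne_of_gt ht
  have hdet : ∀ s ≠ (0 : ℝ), IsUnit (A s).det := fun s hs =>
    (Matrix.isUnit_iff_isUnit_det _).mp (hinv s hs)
  have hAB : ∀ s ≠ (0 : ℝ), A s * (A s)⁻¹ = 1 := fun s hs =>
    Matrix.mul_nonsing_inv _ (hdet s hs)
  have hBA : ∀ s ≠ (0 : ℝ), (A s)⁻¹ * A s = 1 := fun s hs =>
    Matrix.nonsing_inv_mul _ (hdet s hs)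
  -- continuity of the inverse at t
  have hBc : ContinuousAt (fun s => (A s)⁻¹) t := by
    have h1 : ContinuousAt Inv.inv (A t) := by
      refine continuousAt_matrix_inv (A t) ?_
      rw [Ring.inverse_eq_inv']
      exact continuousAt_inv₀ (hdet t htne).ne_zero
    exact h1.comp (hA t).continuousAt
  -- derivative of the inverse
  have hB : HasDerivAt (fun s => (A s)⁻¹) (-((A t)⁻¹ * A' t * (A t)⁻¹)) t := by
    refine hasDerivAt_iff_tendsto_slope.mpr ?_
    have hev : ∀ᶠ s in nhdsWithin t {t}ᶜ,
        (A s)⁻¹ * (-(slope A t s)) * (A t)⁻¹ = slope (fun s => (A s)⁻¹) t s := by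
      have hne : ∀ᶠ s in nhdsWithin t {t}ᶜ, s ≠ (0 : ℝ) :=
        eventually_nhdsWithin_of_eventually_nhds (eventually_ne_nhds htne)
      filter_upwards [hne] with s hs0
      have h1 : (A s)⁻¹ * A s = 1 := hBA s hs0
      have h2 : A t * (A t)⁻¹ = 1 := hAB t htne
      have key : (A s)⁻¹ * (A t - A s) * (A t)⁻¹ = (A s)⁻¹ - (A t)⁻¹ := by
        rw [mul_sub, sub_mul, h1, one_mul, mul_assoc, h2, mul_one]
      rw [slope_def_module, slope_def_module]
      have hneg : -((s - t)⁻¹ • (A s - A t)) = (s - t)⁻¹ • (A t - A s) := by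
        rw [← smul_neg, neg_sub]
      rw [hneg, ← key, Matrix.mul_smul, Matrix.smul_mul]
    refine Filter.Tendsto.congr' hev ?_
    have hslope : Filter.Tendsto (slope A t) (nhdsWithin t {t}ᶜ) (nhds (A' t)) :=
      hasDerivAt_iff_tendsto_slope.mp (hA t)
    have hBt : Filter.Tendsto (fun s => (A s)⁻¹) (nhdsWithin t {t}ᶜ) (nhds ((A t)⁻¹)) :=
      hBc.tendsto.mono_left nhdsWithin_le_nhds
    have := (hBt.mul hslope.neg).mul (tendsto_const_nhds (x := (A t)⁻¹))
    simp only [mul_neg, neg_mul] at this ⊢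
    exact this
  -- the Riccati equation
  have hU := (hA' t).matrix_mul hB
  have hderiv : HasDerivAt (fun s => A' s * (A s)⁻¹)
      (-((A' t * (A t)⁻¹) * (A' t * (A t)⁻¹) + K t)) t := by
    convert hU using 1
    have h2 : A t * (A t)⁻¹ = 1 := hAB t htne
    have e1 : (-(K t * A t)) * (A t)⁻¹ = -(K t) := by
      rw [neg_mul, mul_assoc, h2, mul_one]
    rw [e1]
    noncomm_ring
  refine ⟨hderiv, ?_⟩
  -- symmetry: W = Aᵀ A' - A'ᵀ A is constant
  have hAT : ∀ s, HasDerivAt (fun r => (A r)ᵀ) ((A' s)ᵀ) s := by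
    intro s
    rw [hasDerivAt_matrix]
    intro i j
    exact hasDerivAt_matrix.mp (hA s) j i
  have hA'T : ∀ s, HasDerivAt (fun r => (A' r)ᵀ) ((-(K s * A s))ᵀ) s := by
    intro s
    rw [hasDerivAt_matrix]
    intro i j
    exact hasDerivAt_matrix.mp (hA' s) j i
  have hW : ∀ s, HasDerivAt (fun r => (A r)ᵀ * A' r - (A' r)ᵀ * A r) 0 s := by
    intro s
    have h1 := (hAT s).matrix_mul (hA' s)
    have h2 := (hA'T s).matrix_mul (hA s)
    have h3 := h1.sub h2
    convert h3 using 1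
    case e'_4 => rfl
    case e'_5 => rfl
    case e'_6 => rfl
    case e'_8 => rfl
    have : (-(K s * A s))ᵀ = -((A s)ᵀ * K s) := by
      rw [Matrix.transpose_neg, Matrix.transpose_mul, hKsymm s]
    rw [this]
    simp only [mul_neg, neg_mul, mul_assoc]
    abel
  have hWconst : (A t)ᵀ * A' t - (A' t)ᵀ * A t = (A 0)ᵀ * A' 0 - (A' 0)ᵀ * A 0 := by
    have hdiff : Differentiable ℝ (fun r => (A r)ᵀ * A' r - (A' r)ᵀ * A r) :=
      fun s => (hW s).differentiableAt
    have hd0 : ∀ s, deriv (fun r => (A r)ᵀ * A' r - (A' r)ᵀ * A r) s = 0 :=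
      fun s => (hW s).deriv
    exact is_const_of_deriv_eq_zero hdiff hd0 t 0
  have hsymmEq : (A t)ᵀ * A' t = (A' t)ᵀ * A t := by
    rw [hA0, hA'0] at hWconst
    simp only [Matrix.transpose_zero, Matrix.transpose_one, zero_mul, mul_zero,
      one_mul, mul_one, sub_zero, zero_sub, sub_eq_zero] at hWconst
    exact hWconst
  have hdtT : IsUnit ((A t)ᵀ).det := by
    rw [Matrix.det_transpose]; exact hdet t htne
  have hQ : (A' t)ᵀ = (A t)ᵀ * (A' t * (A t)⁻¹) := by
    rw [← mul_assoc, hsymmEq, mul_assoc, hAB t htne, mul_one]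
  rw [Matrix.transpose_mul, Matrix.transpose_nonsing_inv, hQ, ← mul_assoc,
    Matrix.nonsing_inv_mul _ hdtT, one_mul]
end
end

section
/- Let A be as in the no-conjugate-points setting (A'' + KA = 0, A(0)=0, A'(0)=I, A(t) invertible for t ≠ 0). For s, t of the same sign with 0 < s < t (or t < s < 0), the unique Jacobi field D_t with D_t(0) = I and D_t(t) = 0 satisfies D_t(s) = A(s) · ∫ₛᵗ A(ℓ)⁻¹ A(ℓ)⁻¹ᵀ dℓ. -/
open Matrix MeasureTheory

noncomputable section

set_option maxHeartbeats 1000000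
set_option synthInstance.maxHeartbeats 400000

attribute [local instance] Matrix.normedAddCommGroup Matrix.normedSpace

namespace DFormulaAux

variable {m : ℕ}

lemma entry_deriv {f : ℝ → Matrix (Fin m) (Fin m) ℝ} {f' : Matrix (Fin m) (Fin m) ℝ} {x : ℝ}
    (hf : HasDerivAt f f' x) (i j : Fin m) : HasDerivAt (fun s => f s i j) (f' i j) x :=
  hasDerivAt_pi.mp (hasDerivAt_pi.mp hf i) j

lemma _root_.HasDerivAt.matMul {f g : ℝ → Matrix (Fin m) (Fin m) ℝ} {f' g' : Matrix (Fin m) (Fin m) ℝ} {x : ℝ}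
    (hf : HasDerivAt f f' x) (hg : HasDerivAt g g' x) :
    HasDerivAt (fun s => f s * g s) (f' * g x + f x * g') x := by
  refine hasDerivAt_pi.mpr ?_; intro i
  refine hasDerivAt_pi.mpr ?_; intro j
  have h : ∀ s, (f s * g s) i j = ∑ k, f s i k * g s k j := fun s => Matrix.mul_apply
  simp only [h]
  have hsum := HasDerivAt.sum (u := Finset.univ) (fun k _ =>
    ((entry_deriv hf i k).mul (entry_deriv hg k j)))
  convert hsum using 1
  · ext s; simp [Finset.sum_apply]
  simp [Matrix.add_apply, Matrix.mul_apply, Finset.sum_add_distrib]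

lemma _root_.HasDerivAt.matTrans {f : ℝ → Matrix (Fin m) (Fin m) ℝ} {f' : Matrix (Fin m) (Fin m) ℝ} {x : ℝ}
    (hf : HasDerivAt f f' x) : HasDerivAt (fun s => (f s)ᵀ) f'ᵀ x := by
  refine hasDerivAt_pi.mpr ?_; intro i
  refine hasDerivAt_pi.mpr ?_; intro j
  exact entry_deriv hf j i

lemma ring_inverse_toE (M : Matrix (Fin m) (Fin m) ℝ) :
    Ring.inverse ((Matrix.toEuclideanCLM (𝕜 := ℝ)) M) = (Matrix.toEuclideanCLM (𝕜 := ℝ)) M⁻¹ := by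
  set φ := (Matrix.toEuclideanCLM (𝕜 := ℝ) (n := Fin m))
  by_cases h : IsUnit M
  · have hdet : IsUnit M.det := (Matrix.isUnit_iff_isUnit_det _).mp h
    have h1 : φ M * φ M⁻¹ = 1 := by
      rw [← _root_.map_mul, Matrix.mul_nonsing_inv _ hdet, _root_.map_one]
    have hu : IsUnit (φ M) := h.map _
    calc Ring.inverse (φ M) = Ring.inverse (φ M) * (φ M * φ M⁻¹) := by rw [h1, mul_one]
      _ = (Ring.inverse (φ M) * φ M) * φ M⁻¹ := by rw [mul_assoc]
      _ = φ M⁻¹ := by rw [Ring.inverse_mul_cancel _ hu, one_mul]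
  · have h2 : ¬ IsUnit (φ M) := by
      intro hc; exact h (by simpa using hc.map φ.symm)
    rw [Ring.inverse_non_unit _ h2, Matrix.nonsing_inv_apply_not_isUnit _
      (by rwa [← Matrix.isUnit_iff_isUnit_det]), map_zero]

/-- The matrix algebra as a continuous linear equiv with Euclidean CLMs. -/
def eCLE (m : ℕ) : Matrix (Fin m) (Fin m) ℝ ≃L[ℝ]
    (EuclideanSpace ℝ (Fin m) →L[ℝ] EuclideanSpace ℝ (Fin m)) :=
  LinearEquiv.toContinuousLinearEquiv
  { toFun := Matrix.toEuclideanCLM (𝕜 := ℝ)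
    invFun := (Matrix.toEuclideanCLM (𝕜 := ℝ)).symm
    left_inv := fun M => by simp
    right_inv := fun M => by simp
    map_add' := fun a b => by simp
    map_smul' := fun c a => by simp }

lemma _root_.HasDerivAt.matInv {f : ℝ → Matrix (Fin m) (Fin m) ℝ} {f' : Matrix (Fin m) (Fin m) ℝ} {x : ℝ}
    (hf : HasDerivAt f f' x) (hu : IsUnit (f x)) :
    HasDerivAt (fun s => (f s)⁻¹) (-((f x)⁻¹ * f' * (f x)⁻¹)) x := by
  set φ := (Matrix.toEuclideanCLM (𝕜 := ℝ) (n := Fin m))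
  set e := eCLE m
  have h1 : HasDerivAt (fun s => φ (f s)) (φ f') x :=
    (e.toContinuousLinearMap.hasFDerivAt.comp_hasDerivAt x hf :)
  have hu' : IsUnit (φ (f x)) := hu.map _
  have hinvval : (↑hu'.unit⁻¹ : EuclideanSpace ℝ (Fin m) →L[ℝ] EuclideanSpace ℝ (Fin m))
      = φ (f x)⁻¹ := by
    rw [← Ring.inverse_unit, hu'.unit_spec, ring_inverse_toE]
  have h2 := (hasFDerivAt_ringInverse (𝕜 := ℝ) hu'.unit).comp_hasDerivAt x h1
  have h3 := e.symm.toContinuousLinearMap.hasFDerivAt.comp_hasDerivAt x h2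
  simp only [Function.comp_def, ContinuousLinearEquiv.coe_coe] at h3
  have key : (fun s => e.symm (Ring.inverse (φ (f s)))) = fun s => (f s)⁻¹ := by
    funext s
    rw [ring_inverse_toE]
    exact e.symm_apply_apply _
  rw [key] at h3
  refine h3.congr_deriv (Eq.symm ?_)
  simp only [ContinuousLinearMap.neg_apply, ContinuousLinearMap.mulLeftRight_apply, hinvval,
    ← _root_.map_mul]
  rw [← map_neg]
  exact (φ.symm_apply_apply _).symm

end DFormulaAux

open DFormulaAux

/-- In the no-conjugate-points setting, the boundary Jacobi field `D_t` (with
`D_t(0) = 1`, `D_t(t) = 0`) is given by `D_t(s) = A(s) ∫ₛᵗ A(ℓ)⁻¹ A(ℓ)⁻¹ᵀ dℓ`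
for `s, t` of the same sign with `0 < s < t` or `t < s < 0`. -/
theorem D_formula {m : ℕ}
    (K A A' : ℝ → Matrix (Fin m) (Fin m) ℝ)
    (D D' : ℝ → ℝ → Matrix (Fin m) (Fin m) ℝ)
    (hK : Continuous K)
    (hKsymm : ∀ t, (K t)ᵀ = K t)
    (hA : ∀ t, HasDerivAt A (A' t) t)
    (hA' : ∀ t, HasDerivAt A' (-(K t * A t)) t)
    (hA0 : A 0 = 0) (hA'0 : A' 0 = 1)
    (hinv : ∀ t ≠ (0 : ℝ), IsUnit (A t))
    (hD : ∀ t ≠ (0 : ℝ), ∀ s, HasDerivAt (D t) (D' t s) s)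
    (hD' : ∀ t ≠ (0 : ℝ), ∀ s, HasDerivAt (D' t) (-(K s * D t s)) s)
    (hD0 : ∀ t ≠ (0 : ℝ), D t 0 = 1)
    (hDt : ∀ t ≠ (0 : ℝ), D t t = 0) :
    ∀ s t : ℝ, (0 < s ∧ s < t) ∨ (t < s ∧ s < 0) →
      D t s = A s * ∫ ℓ in s..t, (A ℓ)⁻¹ * ((A ℓ)⁻¹)ᵀ := by
  intro s t hst
  have hs0 : s ≠ 0 := by rcases hst with ⟨h1, h2⟩ | ⟨h1, h2⟩ <;> [exact ne_of_gt h1; exact ne_of_lt h2]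
  have ht0 : t ≠ 0 := by rcases hst with ⟨h1, h2⟩ | ⟨h1, h2⟩ <;> [exact ne_of_gt (h1.trans h2); exact ne_of_lt (h2.trans' h1)]
  have hmem : ∀ ℓ ∈ Set.uIcc s t, ℓ ≠ 0 := by
    rcases hst with ⟨h1, h2⟩ | ⟨h1, h2⟩
    · intro ℓ hℓ
      rw [Set.uIcc_of_le h2.le] at hℓ
      have := hℓ.1; intro h; linarith
    · intro ℓ hℓ
      rw [Set.uIcc_of_ge h1.le] at hℓ
      have := hℓ.2; intro h; linarith
  -- Wronskian relations
  have w1 : ∀ u : ℝ, (A' u)ᵀ * D t u - (A u)ᵀ * D' t u = 1 := by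
    set g : ℝ → Matrix (Fin m) (Fin m) ℝ := fun u => (A' u)ᵀ * D t u - (A u)ᵀ * D' t u with hg_def
    have hg : ∀ u, HasDerivAt g 0 u := by
      intro u
      have h1 := ((HasDerivAt.matTrans (hA' u))).matMul (hD t ht0 u)
      have h2 := ((HasDerivAt.matTrans (hA u))).matMul (hD' t ht0 u)
      have h3 := h1.sub h2
      refine h3.congr_deriv ?_
      rw [Matrix.transpose_neg, Matrix.transpose_mul, hKsymm]
      noncomm_ring
    have hconst : ∀ u, g u = g 0 :=
      fun u => is_const_of_deriv_eq_zero (fun v => (hg v).differentiableAt)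
        (fun v => (hg v).deriv) u 0
    intro u
    have h := hconst u
    simp only [hg_def, hA0, hA'0, hD0 t ht0, Matrix.transpose_zero, Matrix.transpose_one,
      one_mul, zero_mul, sub_zero] at h
    exact h
  have w2 : ∀ u : ℝ, (A u)ᵀ * A' u = (A' u)ᵀ * A u := by
    set g : ℝ → Matrix (Fin m) (Fin m) ℝ := fun u => (A u)ᵀ * A' u - (A' u)ᵀ * A u with hg_def
    have hg : ∀ u, HasDerivAt g 0 u := by
      intro u
      have h1 := ((HasDerivAt.matTrans (hA u))).matMul (hA' u)
      have h2 := ((HasDerivAt.matTrans (hA' u))).matMul (hA u)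
      have h3 := h1.sub h2
      refine h3.congr_deriv ?_
      rw [Matrix.transpose_neg, Matrix.transpose_mul, hKsymm]
      noncomm_ring
    have hconst : ∀ u, g u = g 0 :=
      fun u => is_const_of_deriv_eq_zero (fun v => (hg v).differentiableAt)
        (fun v => (hg v).deriv) u 0
    intro u
    have h := hconst u
    simp only [hg_def, hA0, Matrix.transpose_zero, zero_mul, mul_zero, sub_zero] at h
    exact sub_eq_zero.mp h
  -- key relation for D'
  have hDrel : ∀ u : ℝ, u ≠ 0 → D' t u = A' u * (A u)⁻¹ * D t u - ((A u)⁻¹)ᵀ := by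
    intro u hu0
    have hu : IsUnit (A u) := hinv u hu0
    have hdet : IsUnit (A u).det := (Matrix.isUnit_iff_isUnit_det _).mp hu
    have hdetT : IsUnit ((A u)ᵀ).det := by rwa [Matrix.det_transpose]
    have hTinv : ((A u)ᵀ)⁻¹ * (A u)ᵀ = 1 := Matrix.nonsing_inv_mul _ hdetT
    have e1 : (A u)ᵀ * D' t u = (A' u)ᵀ * D t u - 1 := by
      rw [← w1 u]; abel
    have e2 : ((A u)ᵀ)⁻¹ * (A' u)ᵀ = A' u * (A u)⁻¹ := by
      calc ((A u)ᵀ)⁻¹ * (A' u)ᵀ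
          = ((A u)ᵀ)⁻¹ * ((A' u)ᵀ * (A u * (A u)⁻¹)) := by
            rw [Matrix.mul_nonsing_inv _ hdet, mul_one]
        _ = ((A u)ᵀ)⁻¹ * (((A' u)ᵀ * A u) * (A u)⁻¹) := by noncomm_ring
        _ = ((A u)ᵀ)⁻¹ * (((A u)ᵀ * A' u) * (A u)⁻¹) := by rw [← w2 u]
        _ = (((A u)ᵀ)⁻¹ * (A u)ᵀ) * (A' u * (A u)⁻¹) := by noncomm_ring
        _ = A' u * (A u)⁻¹ := by rw [hTinv, one_mul]
    calc D' t u = ((A u)ᵀ)⁻¹ * ((A u)ᵀ * D' t u) := by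
          rw [← mul_assoc, hTinv, one_mul]
      _ = ((A u)ᵀ)⁻¹ * (A' u)ᵀ * D t u - ((A u)ᵀ)⁻¹ := by rw [e1]; noncomm_ring
      _ = A' u * (A u)⁻¹ * D t u - ((A u)⁻¹)ᵀ := by rw [e2, Matrix.transpose_nonsing_inv]
  -- the function F = A⁻¹ D and its derivative on the interval
  set F : ℝ → Matrix (Fin m) (Fin m) ℝ := fun ℓ => (A ℓ)⁻¹ * D t ℓ with hF_def
  have hF : ∀ ℓ ∈ Set.uIcc s t, HasDerivAt F (-((A ℓ)⁻¹ * ((A ℓ)⁻¹)ᵀ)) ℓ := by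
    intro ℓ hℓ
    have hℓ0 := hmem ℓ hℓ
    have hu : IsUnit (A ℓ) := hinv ℓ hℓ0
    have hiv := (hA ℓ).matInv hu
    have hprod := hiv.matMul (hD t ht0 ℓ)
    convert hprod using 1
    rw [hDrel ℓ hℓ0]
    have hdet : IsUnit (A ℓ).det := (Matrix.isUnit_iff_isUnit_det _).mp hu
    have hIA : (A ℓ)⁻¹ * A ℓ = 1 := Matrix.nonsing_inv_mul _ hdet
    calc -((A ℓ)⁻¹ * ((A ℓ)⁻¹)ᵀ)
        = -((A ℓ)⁻¹ * A' ℓ * (A ℓ)⁻¹ * D t ℓ)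
          + ((A ℓ)⁻¹ * (A' ℓ * (A ℓ)⁻¹ * D t ℓ) - (A ℓ)⁻¹ * ((A ℓ)⁻¹)ᵀ) := by noncomm_ring
      _ = -((A ℓ)⁻¹ * A' ℓ * (A ℓ)⁻¹) * D t ℓ
          + (A ℓ)⁻¹ * (A' ℓ * (A ℓ)⁻¹ * D t ℓ - ((A ℓ)⁻¹)ᵀ) := by noncomm_ring
  -- integrability of the derivative
  have hcont : ContinuousOn (fun ℓ => (A ℓ)⁻¹ * ((A ℓ)⁻¹)ᵀ) (Set.uIcc s t) := by
    intro ℓ hℓ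
    have hℓ0 := hmem ℓ hℓ
    have hiv := (hA ℓ).matInv (hinv ℓ hℓ0)
    exact ((hiv.matMul hiv.matTrans).continuousAt).continuousWithinAt
  have hint := hcont.intervalIntegrable (μ := volume)
  have hftc := intervalIntegral.integral_eq_sub_of_hasDerivAt hF hint.neg
  rw [intervalIntegral.integral_neg] at hftc
  have hFt : F t = 0 := by rw [hF_def]; simp [hDt t ht0]
  have hFs : F s = ∫ ℓ in s..t, (A ℓ)⁻¹ * ((A ℓ)⁻¹)ᵀ := by
    have := hftc
    rw [hFt, zero_sub, neg_inj] at this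
    exact this.symm
  have hdet : IsUnit (A s).det := (Matrix.isUnit_iff_isUnit_det _).mp (hinv s hs0)
  calc D t s = A s * ((A s)⁻¹ * D t s) := by
        rw [← mul_assoc, Matrix.mul_nonsing_inv _ hdet, one_mul]
    _ = A s * ∫ ℓ in s..t, (A ℓ)⁻¹ * ((A ℓ)⁻¹)ᵀ := by
        rw [show (A s)⁻¹ * D t s = F s from rfl, hFs]
end
end

section
/- In the no-conjugate-points setting with M(s) = ∫ₛ^∞ A(ℓ)⁻¹A(ℓ)⁻¹ᵀ dℓ finite and positive definite, the difference of the two Riccati solutions U = A'A⁻¹ and V = D_{+∞}'D_{+∞}⁻¹ satisfies U(t) − V(t) = A(t)⁻¹ᵀ · M(t)⁻¹ · A(t)⁻¹ for all t > 0. -/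
open Matrix MeasureTheory

noncomputable section

attribute [local instance] Matrix.normedAddCommGroup Matrix.normedSpace

/-- Matrix multiplication as a continuous bilinear map. -/
def matMulCLM (m : ℕ) :
    Matrix (Fin m) (Fin m) ℝ →L[ℝ] Matrix (Fin m) (Fin m) ℝ →L[ℝ] Matrix (Fin m) (Fin m) ℝ :=
  LinearMap.toContinuousLinearMap
    ((LinearMap.toContinuousLinearMap (𝕜 := ℝ)
        (E := Matrix (Fin m) (Fin m) ℝ) (F' := Matrix (Fin m) (Fin m) ℝ)).toLinearMap.comp
      (LinearMap.mul ℝ (Matrix (Fin m) (Fin m) ℝ)))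

@[simp] theorem matMulCLM_apply {m : ℕ} (X Y : Matrix (Fin m) (Fin m) ℝ) :
    matMulCLM m X Y = X * Y := by
  simp [matMulCLM, LinearMap.coe_toContinuousLinearMap']

/-- With `M(s) = ∫ₛ^∞ A(ℓ)⁻¹A(ℓ)⁻¹ᵀ dℓ` finite positive definite and
`D_∞(s) = A(s)·M(s)` the stable Jacobi field, the difference of the two Riccati
solutions `U = A'A⁻¹` and `V = D_∞'D_∞⁻¹` is `U − V = A⁻¹ᵀ M⁻¹ A⁻¹` on `(0,∞)`. -/
theorem riccati_difference {m : ℕ}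
    (K A A' DInf' : ℝ → Matrix (Fin m) (Fin m) ℝ)
    (hK : Continuous K)
    (hKsymm : ∀ t, (K t)ᵀ = K t)
    (hA : ∀ t, HasDerivAt A (A' t) t)
    (hA' : ∀ t, HasDerivAt A' (-(K t * A t)) t)
    (hA0 : A 0 = 0) (hA'0 : A' 0 = 1)
    (hinv : ∀ t ≠ (0 : ℝ), IsUnit (A t))
    (hMint : ∀ s > (0 : ℝ), @IntegrableOn ℝ (Matrix (Fin m) (Fin m) ℝ) _ _
      (@SeminormedAddGroup.toContinuousENorm _ _) (fun ℓ => (A ℓ)⁻¹ * ((A ℓ)⁻¹)ᵀ) (Set.Ioi s) volume)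
    (hMpos : ∀ s > (0 : ℝ), (∫ ℓ in Set.Ioi s, (A ℓ)⁻¹ * ((A ℓ)⁻¹)ᵀ).PosDef)
    (hDInfInv : ∀ s > (0 : ℝ),
      IsUnit (A s * ∫ ℓ in Set.Ioi s, (A ℓ)⁻¹ * ((A ℓ)⁻¹)ᵀ))
    (hDInf' : ∀ t > (0 : ℝ),
      HasDerivAt (fun s => A s * ∫ ℓ in Set.Ioi s, (A ℓ)⁻¹ * ((A ℓ)⁻¹)ᵀ) (DInf' t) t) :
    ∀ t > (0 : ℝ),
      A' t * (A t)⁻¹ -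
        DInf' t * (A t * ∫ ℓ in Set.Ioi t, (A ℓ)⁻¹ * ((A ℓ)⁻¹)ᵀ)⁻¹ =
      ((A t)⁻¹)ᵀ * (∫ ℓ in Set.Ioi t, (A ℓ)⁻¹ * ((A ℓ)⁻¹)ᵀ)⁻¹ * (A t)⁻¹ := by
  intro t ht
  classical
  letI : ContinuousENorm (Matrix (Fin m) (Fin m) ℝ) := SeminormedAddGroup.toContinuousENorm
  letI : ENormedAddMonoid (Matrix (Fin m) (Fin m) ℝ) := NormedAddGroup.toENormedAddMonoid
  letI : TopologicalSpace.PseudoMetrizableSpace (Matrix (Fin m) (Fin m) ℝ) :=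
    inferInstanceAs (TopologicalSpace.PseudoMetrizableSpace (Fin m → Fin m → ℝ))
  set f : ℝ → Matrix (Fin m) (Fin m) ℝ := fun ℓ => (A ℓ)⁻¹ * ((A ℓ)⁻¹)ᵀ with hfdef
  set Mf : ℝ → Matrix (Fin m) (Fin m) ℝ := fun s => ∫ ℓ in Set.Ioi s, f ℓ with hMdef
  -- continuity of the integrand away from 0
  have hAinvCont : ∀ s : ℝ, s ≠ 0 → ContinuousAt (fun x => (A x)⁻¹) s := by
    intro s hs
    have hdet : IsUnit (A s).det := (Matrix.isUnit_iff_isUnit_det _).mp (hinv s hs)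
    have h1 : ContinuousAt Ring.inverse (A s).det := by
      have := NormedRing.inverse_continuousAt hdet.unit
      simpa using this
    exact (continuousAt_matrix_inv (A s) h1).comp (hA s).continuousAt
  have hfCont : ∀ s : ℝ, s ≠ 0 → ContinuousAt f s := by
    intro s hs
    have h1 := hAinvCont s hs
    have h2 : ContinuousAt (fun x => ((A x)⁻¹)ᵀ) s :=
      (continuous_id.matrix_transpose.continuousAt).comp h1
    exact h1.mul h2
  set b : ℝ := t / 2 with hbdef
  have hb : 0 < b := by positivity
  have hbt : b < t := by simp [hbdef]; linarith
  -- splitting the improper integral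
  have hsplit : ∀ s : ℝ, 0 < s → Mf s = Mf b - ∫ x in b..s, f x := by
    intro s hs
    rcases le_total b s with hle | hle
    · have hU : Set.Ioc b s ∪ Set.Ioi s = Set.Ioi b := Set.Ioc_union_Ioi_eq_Ioi hle
      have hint1 : IntegrableOn f (Set.Ioc b s) :=
        (hMint b hb).mono_set (fun x hx => hx.1)
      have hint2 : IntegrableOn f (Set.Ioi s) := hMint s hs
      have := MeasureTheory.setIntegral_union
        (Set.Ioc_disjoint_Ioi le_rfl) measurableSet_Ioi hint1 hint2
      rw [hU] at this
      rw [intervalIntegral.integral_of_le hle]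
      simp only [Mf, this]
      abel
    · have hU : Set.Ioc s b ∪ Set.Ioi b = Set.Ioi s := Set.Ioc_union_Ioi_eq_Ioi hle
      have hint1 : IntegrableOn f (Set.Ioc s b) :=
        (hMint s hs).mono_set (fun x hx => hx.1)
      have hint2 : IntegrableOn f (Set.Ioi b) := hMint b hb
      have := MeasureTheory.setIntegral_union
        (Set.Ioc_disjoint_Ioi le_rfl) measurableSet_Ioi hint1 hint2
      rw [hU] at this
      rw [intervalIntegral.integral_symm, intervalIntegral.integral_of_le hle]
      simp only [Mf, this]
      abel
  -- FTC
  have hmeas : StronglyMeasurableAtFilter f (nhds t) volume := by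
    refine ⟨Set.Ioi 0, Ioi_mem_nhds ht, ?_⟩
    have hcont : ContinuousOn f (Set.Ioi 0) := fun x hx =>
      (hfCont x (ne_of_gt hx)).continuousWithinAt
    exact hcont.aestronglyMeasurable measurableSet_Ioi
  have hii : IntervalIntegrable f volume b t := by
    rw [intervalIntegrable_iff_integrableOn_Ioc_of_le hbt.le]
    exact (hMint b hb).mono_set (fun x hx => hx.1)
  have hFTC : HasDerivAt (fun s => ∫ x in b..s, f x) (f t) t :=
    intervalIntegral.integral_hasDerivAt_right hii hmeas (hfCont t ht.ne')
  have hM' : HasDerivAt Mf (-(f t)) t := by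
    have h1 : HasDerivAt (fun s => Mf b - ∫ x in b..s, f x) (-(f t)) t := hFTC.const_sub _
    refine h1.congr_of_eventuallyEq ?_
    filter_upwards [Ioi_mem_nhds ht] with s hs
    exact hsplit s hs
  -- product rule
  letI : NormedAddCommGroup (Matrix (Fin m) (Fin m) ℝ →L[ℝ] Matrix (Fin m) (Fin m) ℝ) :=
    ContinuousLinearMap.toNormedAddCommGroup
  letI : NormedSpace ℝ (Matrix (Fin m) (Fin m) ℝ →L[ℝ] Matrix (Fin m) (Fin m) ℝ) :=
    ContinuousLinearMap.toNormedSpace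
  have h1 : HasDerivAt (fun s => matMulCLM m (A s)) (matMulCLM m (A' t)) t :=
    ((matMulCLM m).hasFDerivAt (x := A t)).comp_hasDerivAt t (hA t)
  have hAM : HasDerivAt (fun s => A s * Mf s) (A' t * Mf t + A t * (-(f t))) t := by
    have h2 := h1.clm_apply hM'
    exact h2
  have hDval : DInf' t = A' t * Mf t + A t * (-(f t)) := (hDInf' t ht).unique hAM
  -- algebra
  have hAu : IsUnit (A t).det := (Matrix.isUnit_iff_isUnit_det _).mp (hinv t ht.ne')
  have hMu : IsUnit (Mf t).det := by
    have := (hMpos t ht).det_pos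
    exact isUnit_iff_ne_zero.mpr (ne_of_gt this)
  have hAAinv : A t * (A t)⁻¹ = 1 := Matrix.mul_nonsing_inv _ hAu
  have hMMinv : Mf t * (Mf t)⁻¹ = 1 := Matrix.mul_nonsing_inv _ hMu
  have hft : A t * f t = ((A t)⁻¹)ᵀ := by
    simp only [hfdef]
    rw [← Matrix.mul_assoc, hAAinv, Matrix.one_mul]
  have hDval' : DInf' t = A' t * Mf t - ((A t)⁻¹)ᵀ := by
    rw [hDval, mul_neg, hft, sub_eq_add_neg]
  have hrev : (A t * Mf t)⁻¹ = (Mf t)⁻¹ * (A t)⁻¹ := Matrix.mul_inv_rev _ _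
  show A' t * (A t)⁻¹ - DInf' t * (A t * Mf t)⁻¹ = ((A t)⁻¹)ᵀ * (Mf t)⁻¹ * (A t)⁻¹
  rw [hrev, hDval', Matrix.sub_mul]
  rw [Matrix.mul_assoc (A' t), ← Matrix.mul_assoc (Mf t), hMMinv, Matrix.one_mul,
    Matrix.mul_assoc]
  abel
end
end

section
/- Suppose S, T : (0,∞) → Matrix (Fin m) (Fin m) ℝ are symmetric solutions of the Riccati equation with ‖S(t)‖ ≤ k coth(kt) and ‖T(t)‖ ≤ k coth(kt), and suppose S(t) − T(t) = A(t)⁻¹ᵀ M(t)⁻¹ A(t)⁻¹ with M(t) symmetric positive definite. Then ‖A(t)⁻¹‖₂² ≤ 2 ‖M(t)‖₂ · k coth(kt) for all t > 0. -/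
open Matrix MeasureTheory

noncomputable section

attribute [local instance] Matrix.normedAddCommGroup Matrix.normedSpace

lemma star_toEuclideanCLM {m : ℕ} (X : Matrix (Fin m) (Fin m) ℝ) :
    star (Matrix.toEuclideanCLM (𝕜 := ℝ) X) = Matrix.toEuclideanCLM (𝕜 := ℝ) Xᵀ := by
  rw [← map_star]
  simp [Matrix.star_eq_conjTranspose, Matrix.conjTranspose_eq_transpose_of_trivial]

open scoped MatrixOrder in
/-- For a positive definite `M`, `‖y‖² ≤ ‖M‖ ⟪y, M⁻¹ y⟫`. -/
lemma key_posdef {m : ℕ} (M : Matrix (Fin m) (Fin m) ℝ) (hM : M.PosDef)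
    (y : EuclideanSpace ℝ (Fin m)) :
    ‖y‖ ^ 2 ≤ opNorm M * (inner ℝ y (Matrix.toEuclideanCLM (𝕜 := ℝ) M⁻¹ y) : ℝ) := by
  have hdet : IsUnit M.det := isUnit_iff_ne_zero.mpr (ne_of_gt hM.det_pos)
  set g := Matrix.toEuclideanCLM (𝕜 := ℝ) M with hg
  set gi := Matrix.toEuclideanCLM (𝕜 := ℝ) M⁻¹ with hgi
  set z := gi y with hzdef
  have hz : g z = y := by
    have : g * gi = 1 := by
      rw [hg, hgi, ← _root_.map_mul, Matrix.mul_nonsing_inv _ hdet, _root_.map_one]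
    calc g (gi y) = (g * gi) y := rfl
    _ = y := by rw [this]; rfl
  set R := CFC.sqrt M with hR
  set r := Matrix.toEuclideanCLM (𝕜 := ℝ) R with hr
  have hrr : r * r = g := by rw [hr, hg, ← _root_.map_mul, CFC.sqrt_mul_sqrt_self M hM.posSemidef.nonneg]
  have hrsa : star r = r := by
    rw [hr, star_toEuclideanCLM]
    congr 1
    have := (Matrix.nonneg_iff_posSemidef.mp (CFC.sqrt_nonneg M)).1
    rwa [Matrix.IsHermitian, Matrix.conjTranspose_eq_transpose_of_trivial] at this
  have hnorm : ‖r‖ ^ 2 = opNorm M := by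
    have := CStarRing.norm_star_mul_self (x := r)
    rw [hrsa, hrr] at this
    rw [opNorm, ← hg, this]; ring
  have hadj : ContinuousLinearMap.adjoint r = r := by
    rw [← ContinuousLinearMap.star_eq_adjoint, hrsa]
  have hrz : ‖r z‖ ^ 2 = (inner ℝ y z : ℝ) := by
    rw [← real_inner_self_eq_norm_sq]
    calc (inner ℝ (r z) (r z) : ℝ) = inner ℝ z (r (r z)) := by
          rw [← ContinuousLinearMap.adjoint_inner_left r (r z) z, hadj]
    _ = inner ℝ z (g z) := by
          have : r (r z) = (r * r) z := rfl
          rw [this, hrr]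
    _ = (inner ℝ y z : ℝ) := by rw [hz, real_inner_comm]
  have hy : y = r (r z) := by
    rw [show r (r z) = (r * r) z from rfl, hrr, hz]
  calc ‖y‖ ^ 2 = ‖r (r z)‖ ^ 2 := by rw [← hy]
  _ ≤ (‖r‖ * ‖r z‖) ^ 2 := by
      have := r.le_opNorm (r z)
      exact pow_le_pow_left₀ (norm_nonneg _) this 2
  _ = ‖r‖ ^ 2 * ‖r z‖ ^ 2 := by ring
  _ = opNorm M * (inner ℝ y z : ℝ) := by rw [hnorm, hrz]

/-- If `S, T` are symmetric Riccati solutions bounded by `k coth(kt)` whose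
difference is `A⁻¹ᵀ M⁻¹ A⁻¹` with `M(t)` symmetric positive definite, then
`‖A(t)⁻¹‖₂² ≤ 2‖M(t)‖₂ · k coth(kt)`. -/
theorem inverse_norm_bound {m : ℕ}
    (K S T A M : ℝ → Matrix (Fin m) (Fin m) ℝ) (k : ℝ) (hk : 0 < k)
    (hKsymm : ∀ t, (K t)ᵀ = K t)
    (hS : ∀ t > (0 : ℝ), HasDerivAt S (-(S t * S t + K t)) t)
    (hT : ∀ t > (0 : ℝ), HasDerivAt T (-(T t * T t + K t)) t)
    (hSsymm : ∀ t > (0 : ℝ), (S t)ᵀ = S t)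
    (hTsymm : ∀ t > (0 : ℝ), (T t)ᵀ = T t)
    (hSb : ∀ t > (0 : ℝ), opNorm (S t) ≤ k * (Real.cosh (k * t) / Real.sinh (k * t)))
    (hTb : ∀ t > (0 : ℝ), opNorm (T t) ≤ k * (Real.cosh (k * t) / Real.sinh (k * t)))
    (hAinv : ∀ t > (0 : ℝ), IsUnit (A t))
    (hMpos : ∀ t > (0 : ℝ), (M t).PosDef)
    (hdiff : ∀ t > (0 : ℝ), S t - T t = ((A t)⁻¹)ᵀ * (M t)⁻¹ * (A t)⁻¹) :
    ∀ t > (0 : ℝ),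
      opNorm ((A t)⁻¹) ^ 2 ≤
        2 * opNorm (M t) * (k * (Real.cosh (k * t) / Real.sinh (k * t))) := by
  intro t ht
  set c : ℝ := k * (Real.cosh (k * t) / Real.sinh (k * t)) with hc
  have hcpos : 0 < c := by
    apply mul_pos hk
    apply div_pos (Real.cosh_pos _)
    exact Real.sinh_pos_iff.mpr (mul_pos hk ht)
  set B := Matrix.toEuclideanCLM (𝕜 := ℝ) ((A t)⁻¹) with hB
  set N := Matrix.toEuclideanCLM (𝕜 := ℝ) (S t - T t) with hN
  set f := Matrix.toEuclideanCLM (𝕜 := ℝ) ((M t)⁻¹) with hf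
  have hMnn : 0 ≤ opNorm (M t) := norm_nonneg _
  have hNle : ‖N‖ ≤ 2 * c := by
    rw [hN, map_sub]
    calc ‖Matrix.toEuclideanCLM (𝕜 := ℝ) (S t) - Matrix.toEuclideanCLM (𝕜 := ℝ) (T t)‖
        ≤ ‖Matrix.toEuclideanCLM (𝕜 := ℝ) (S t)‖ + ‖Matrix.toEuclideanCLM (𝕜 := ℝ) (T t)‖ :=
          norm_sub_le _ _
    _ ≤ c + c := add_le_add (hSb t ht) (hTb t ht)
    _ = 2 * c := by ring
  have hNeq : N = star B * f * B := by
    rw [hN, hdiff t ht, _root_.map_mul, _root_.map_mul, hB, hf, star_toEuclideanCLM]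
  set D : ℝ := 2 * opNorm (M t) * c with hD
  have hDnn : 0 ≤ D := by positivity
  have hxb : ∀ x : EuclideanSpace ℝ (Fin m), ‖B x‖ ^ 2 ≤ D * ‖x‖ ^ 2 := by
    intro x
    have h1 : ‖B x‖ ^ 2 ≤ opNorm (M t) * (inner ℝ (B x) (f (B x)) : ℝ) :=
      key_posdef (M t) (hMpos t ht) (B x)
    have h2 : (inner ℝ (B x) (f (B x)) : ℝ) = inner ℝ x (N x) := by
      rw [hNeq]
      have : (star B * f * B) x = star B (f (B x)) := rfl
      rw [this, ContinuousLinearMap.star_eq_adjoint, ContinuousLinearMap.adjoint_inner_right]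
    have h3 : (inner ℝ x (N x) : ℝ) ≤ ‖N‖ * ‖x‖ ^ 2 := by
      calc (inner ℝ x (N x) : ℝ) ≤ ‖x‖ * ‖N x‖ := real_inner_le_norm _ _
      _ ≤ ‖x‖ * (‖N‖ * ‖x‖) := by
          exact mul_le_mul_of_nonneg_left (N.le_opNorm x) (norm_nonneg _)
      _ = ‖N‖ * ‖x‖ ^ 2 := by ring
    calc ‖B x‖ ^ 2 ≤ opNorm (M t) * (inner ℝ x (N x) : ℝ) := by rwa [h2] at h1
    _ ≤ opNorm (M t) * (‖N‖ * ‖x‖ ^ 2) := by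
        apply mul_le_mul_of_nonneg_left _ hMnn
        exact h3
    _ ≤ opNorm (M t) * ((2 * c) * ‖x‖ ^ 2) := by
        apply mul_le_mul_of_nonneg_left _ hMnn
        exact mul_le_mul_of_nonneg_right hNle (by positivity)
    _ = D * ‖x‖ ^ 2 := by rw [hD]; ring
  have hBle : ‖B‖ ≤ Real.sqrt D := by
    apply ContinuousLinearMap.opNorm_le_bound _ (Real.sqrt_nonneg D)
    intro x
    have := hxb x
    calc ‖B x‖ = Real.sqrt (‖B x‖ ^ 2) := by rw [Real.sqrt_sq (norm_nonneg _)]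
    _ ≤ Real.sqrt (D * ‖x‖ ^ 2) := Real.sqrt_le_sqrt this
    _ = Real.sqrt D * ‖x‖ := by
        rw [Real.sqrt_mul hDnn, Real.sqrt_sq (norm_nonneg _)]
  calc opNorm ((A t)⁻¹) ^ 2 = ‖B‖ ^ 2 := rfl
  _ ≤ Real.sqrt D ^ 2 := pow_le_pow_left₀ (norm_nonneg _) hBle 2
  _ = D := Real.sq_sqrt hDnn
end
end

section
/- Let K : ℝ → Matrix (Fin m) (Fin m) ℝ be continuous with ‖K(t)‖₂ ≤ k_max for all t. Let J₁, J₂ solve X'' + KX = 0 with J₁(0) = I, J₁'(0) = 0, J₂(0) = 0, J₂'(0) = I. Then for 0 < τ < √(2/k_max) there exists a constant C depending only on k_max such that ‖J₁(τ) − I‖₂ ≤ C τ² and ‖J₂(τ) − τ·I‖₂ ≤ C τ³. -/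
open Matrix MeasureTheory

noncomputable section

attribute [local instance] Matrix.normedAddCommGroup Matrix.normedSpace

private lemma gronwall_pair {E : Type*} [NormedAddCommGroup E] [NormedSpace ℝ E]
    {F F' G : ℝ → E} {kmax τ : ℝ} (hk : 0 < kmax)
    (hF : ∀ t, HasDerivAt F (F' t) t) (hF' : ∀ t, HasDerivAt F' (G t) t)
    (hG : ∀ t, ‖G t‖ ≤ kmax * ‖F t‖)
    (h0 : ‖F 0‖ ≤ 1) (h0' : ‖F' 0‖ ≤ 1) :
    ∀ t ∈ Set.Icc (0:ℝ) τ,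
      ‖F t‖ ≤ Real.exp (max 1 kmax * τ) ∧ ‖F' t‖ ≤ Real.exp (max 1 kmax * τ) := by
  set L := max (1:ℝ) kmax with hLdef
  have hL1 : (1:ℝ) ≤ L := le_max_left _ _
  have hLk : kmax ≤ L := le_max_right _ _
  have hL0 : (0:ℝ) ≤ L := zero_le_one.trans hL1
  have key : ∀ t ∈ Set.Icc (0:ℝ) τ,
      ‖(F t, F' t)‖ ≤ gronwallBound 1 L 0 (t - 0) := by
    apply norm_le_gronwallBound_of_norm_deriv_right_le
      (f := fun t => (F t, F' t)) (f' := fun t => (F' t, G t))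
    · intro t _
      exact (((hF t).prodMk (hF' t)).continuousAt).continuousWithinAt
    · intro t _
      exact ((hF t).prodMk (hF' t)).hasDerivWithinAt
    · rw [Prod.norm_def]
      exact max_le h0 h0'
    · intro x _
      rw [Prod.norm_def, Prod.norm_def, add_zero]
      have hmax0 : (0:ℝ) ≤ max ‖F x‖ ‖F' x‖ := le_max_of_le_left (norm_nonneg _)
      refine max_le ?_ ?_
      · calc ‖F' x‖ ≤ max ‖F x‖ ‖F' x‖ := le_max_right _ _
          _ ≤ L * max ‖F x‖ ‖F' x‖ := le_mul_of_one_le_left hmax0 hL1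
      · calc ‖G x‖ ≤ kmax * ‖F x‖ := hG x
          _ ≤ L * max ‖F x‖ ‖F' x‖ :=
            mul_le_mul hLk (le_max_left _ _) (norm_nonneg _) hL0
  intro t ht
  have h := key t ht
  rw [sub_zero, gronwallBound_ε0, one_mul] at h
  have hexp : Real.exp (L * t) ≤ Real.exp (L * τ) :=
    Real.exp_le_exp.2 (mul_le_mul_of_nonneg_left ht.2 hL0)
  exact ⟨(norm_fst_le (F t, F' t)).trans (h.trans hexp),
    (norm_snd_le (F t, F' t)).trans (h.trans hexp)⟩

set_option maxHeartbeats 1000000 in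
/-- Short-time estimates for the fundamental Jacobi fields `J₁, J₂` (with data
`J₁(0)=1, J₁'(0)=0` and `J₂(0)=0, J₂'(0)=1`): for `0 < τ < √(2/k_max)` there is a
constant `C` depending only on `k_max` with `‖J₁(τ)−1‖₂ ≤ Cτ²`, `‖J₂(τ)−τ·1‖₂ ≤ Cτ³`. -/
theorem short_time_estimates {m : ℕ} (kmax : ℝ) (hkmax : 0 < kmax) :
    ∃ C > (0 : ℝ),
      ∀ (K J₁ J₁' J₂ J₂' : ℝ → Matrix (Fin m) (Fin m) ℝ),
        Continuous K →
        (∀ t, opNorm (K t) ≤ kmax) →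
        (∀ t, HasDerivAt J₁ (J₁' t) t) →
        (∀ t, HasDerivAt J₁' (-(K t * J₁ t)) t) →
        (∀ t, HasDerivAt J₂ (J₂' t) t) →
        (∀ t, HasDerivAt J₂' (-(K t * J₂ t)) t) →
        J₁ 0 = 1 → J₁' 0 = 0 → J₂ 0 = 0 → J₂' 0 = 1 →
        ∀ τ : ℝ, 0 < τ → τ < Real.sqrt (2 / kmax) →
          opNorm (J₁ τ - 1) ≤ C * τ ^ 2 ∧
          opNorm (J₂ τ - τ • (1 : Matrix (Fin m) (Fin m) ℝ)) ≤ C * τ ^ 3 := by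
  classical
  set L : ℝ := max 1 kmax with hL
  set B : ℝ := Real.exp (L * Real.sqrt (2 / kmax)) with hB
  have hB0 : (0:ℝ) < B := Real.exp_pos _
  have hL0 : (0:ℝ) ≤ L := zero_le_one.trans (le_max_left _ _)
  refine ⟨kmax * B, mul_pos hkmax hB0, ?_⟩
  intro K J₁ J₁' J₂ J₂' hKc hKb hJ₁ hJ₁' hJ₂ hJ₂' e10 e10' e20 e20' τ hτ hτT
  have hτ0 : (0:ℝ) ≤ τ := hτ.le
  set ψ : Matrix (Fin m) (Fin m) ℝ →ₗ[ℝ]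
      (EuclideanSpace ℝ (Fin m) →L[ℝ] EuclideanSpace ℝ (Fin m)) :=
    { toFun := fun M => Matrix.toEuclideanCLM (𝕜 := ℝ) M
      map_add' := fun a b => map_add _ a b
      map_smul' := fun c a => map_smul _ c a } with hψ
  set Φ := LinearMap.toContinuousLinearMap ψ with hΦdef
  have hΦ : ∀ M, Φ M = Matrix.toEuclideanCLM (𝕜 := ℝ) M := fun M => rfl
  have hΦmul : ∀ A B', Φ (A * B') = Φ A * Φ B' := fun A B' => by
    rw [hΦ, hΦ, hΦ, _root_.map_mul]
  have hΦone : Φ 1 = 1 := by rw [hΦ, _root_.map_one]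
  have hexp : Real.exp (L * τ) ≤ B :=
    Real.exp_le_exp.2 (mul_le_mul_of_nonneg_left hτT.le hL0)
  -- common setup for both Jacobi fields
  have main : ∀ (J J' : ℝ → Matrix (Fin m) (Fin m) ℝ),
      (∀ t, HasDerivAt J (J' t) t) → (∀ t, HasDerivAt J' (-(K t * J t)) t) →
      ‖Φ (J 0)‖ ≤ 1 → ‖Φ (J' 0)‖ ≤ 1 →
      ∀ t ∈ Set.Icc (0:ℝ) τ, ‖Φ (J t)‖ ≤ B ∧ ‖Φ (J' t)‖ ≤ B := by
    intro J J' hJ hJ' h0 h0'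
    have dF : ∀ t, HasDerivAt (fun s => Φ (J s)) (Φ (J' t)) t :=
      fun t => Φ.hasFDerivAt.comp_hasDerivAt t (hJ t)
    have dF' : ∀ t, HasDerivAt (fun s => Φ (J' s)) (-(Φ (K t) * Φ (J t))) t := by
      intro t
      have h := Φ.hasFDerivAt.comp_hasDerivAt t (hJ' t)
      exact h.congr_deriv (by rw [← hΦmul]; exact map_neg Φ _)
    have hGb : ∀ t, ‖-(Φ (K t) * Φ (J t))‖ ≤ kmax * ‖Φ (J t)‖ := by
      intro t
      rw [norm_neg]
      refine (norm_mul_le _ _).trans (mul_le_mul_of_nonneg_right ?_ (norm_nonneg _))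
      rw [hΦ]
      exact hKb t
    intro t ht
    have h := gronwall_pair hkmax dF dF' hGb h0 h0' t ht
    exact ⟨h.1.trans hexp, h.2.trans hexp⟩
  -- FTC helper
  have ftc : ∀ (f f' : ℝ → (EuclideanSpace ℝ (Fin m) →L[ℝ] EuclideanSpace ℝ (Fin m))),
      (∀ t, HasDerivAt f (f' t) t) → Continuous f' → ∀ a b : ℝ,
      (∫ s in a..b, f' s) = f b - f a := fun f f' hf hf' a b =>
    intervalIntegral.integral_eq_sub_of_hasDerivAt (fun x _ => hf x)
      (hf'.intervalIntegrable a b)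
  have hΦKc : Continuous fun t => Φ (K t) := Φ.continuous.comp hKc
  -- derivative/continuity packages
  have dF₁ : ∀ t, HasDerivAt (fun s => Φ (J₁ s)) (Φ (J₁' t)) t :=
    fun t => Φ.hasFDerivAt.comp_hasDerivAt t (hJ₁ t)
  have dF₁' : ∀ t, HasDerivAt (fun s => Φ (J₁' s)) (-(Φ (K t) * Φ (J₁ t))) t := by
    intro t
    have h := Φ.hasFDerivAt.comp_hasDerivAt t (hJ₁' t)
    exact h.congr_deriv (by rw [← hΦmul]; exact map_neg Φ _)
  have dF₂ : ∀ t, HasDerivAt (fun s => Φ (J₂ s)) (Φ (J₂' t)) t :=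
    fun t => Φ.hasFDerivAt.comp_hasDerivAt t (hJ₂ t)
  have dF₂' : ∀ t, HasDerivAt (fun s => Φ (J₂' s)) (-(Φ (K t) * Φ (J₂ t))) t := by
    intro t
    have h := Φ.hasFDerivAt.comp_hasDerivAt t (hJ₂' t)
    exact h.congr_deriv (by rw [← hΦmul]; exact map_neg Φ _)
  have cF₁ : Continuous fun s => Φ (J₁ s) :=
    continuous_iff_continuousAt.2 fun t => (dF₁ t).continuousAt
  have cF₁' : Continuous fun s => Φ (J₁' s) :=
    continuous_iff_continuousAt.2 fun t => (dF₁' t).continuousAt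
  have cF₂ : Continuous fun s => Φ (J₂ s) :=
    continuous_iff_continuousAt.2 fun t => (dF₂ t).continuousAt
  have cF₂' : Continuous fun s => Φ (J₂' s) :=
    continuous_iff_continuousAt.2 fun t => (dF₂' t).continuousAt
  have cG₁ : Continuous fun s => -(Φ (K s) * Φ (J₁ s)) := (hΦKc.mul cF₁).neg
  have cG₂ : Continuous fun s => -(Φ (K s) * Φ (J₂ s)) := (hΦKc.mul cF₂).neg
  -- Grönwall bounds
  have bnd₁ := main J₁ J₁' hJ₁ hJ₁' (by
      rw [e10, hΦone]
      rw [ContinuousLinearMap.one_def]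
      exact ContinuousLinearMap.norm_id_le)
    (by rw [e10', _root_.map_zero, norm_zero]; exact zero_le_one)
  have bnd₂ := main J₂ J₂' hJ₂ hJ₂' (by rw [e20, _root_.map_zero, norm_zero]; exact zero_le_one)
    (by
      rw [e20', hΦone, ContinuousLinearMap.one_def]
      exact ContinuousLinearMap.norm_id_le)
  have hIsub : ∀ t ∈ Set.Icc (0:ℝ) τ, Set.uIoc (0:ℝ) t ⊆ Set.Icc (0:ℝ) τ := by
    intro t ht s hs
    rw [Set.uIoc_of_le ht.1] at hs
    exact ⟨hs.1.le, hs.2.trans ht.2⟩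
  -- J₁' bound: ‖Φ (J₁' t)‖ ≤ kmax * B * τ on [0, τ]
  have b1' : ∀ t ∈ Set.Icc (0:ℝ) τ, ‖Φ (J₁' t)‖ ≤ kmax * B * τ := by
    intro t ht
    have hi := ftc _ _ dF₁' cG₁ 0 t
    rw [e10', _root_.map_zero, sub_zero] at hi
    rw [← hi]
    calc ‖∫ s in (0:ℝ)..t, -(Φ (K s) * Φ (J₁ s))‖ ≤ kmax * B * |t - 0| := by
          refine intervalIntegral.norm_integral_le_of_norm_le_const ?_
          intro s hs
          have hsI := hIsub t ht hs
          rw [norm_neg]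
          refine (norm_mul_le _ _).trans ?_
          have h1 : ‖Φ (K s)‖ ≤ kmax := by rw [hΦ]; exact hKb s
          exact mul_le_mul h1 ((bnd₁ s hsI).1) (norm_nonneg _) hkmax.le
      _ ≤ kmax * B * τ := by
          rw [sub_zero, abs_of_nonneg ht.1]
          exact mul_le_mul_of_nonneg_left ht.2 (by positivity)
  -- J₂ bound: ‖Φ (J₂ s)‖ ≤ B * τ on [0, τ]
  have b2 : ∀ t ∈ Set.Icc (0:ℝ) τ, ‖Φ (J₂ t)‖ ≤ B * τ := by
    intro t ht
    have hi := ftc _ _ dF₂ cF₂' 0 t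
    rw [e20, _root_.map_zero, sub_zero] at hi
    rw [← hi]
    calc ‖∫ s in (0:ℝ)..t, Φ (J₂' s)‖ ≤ B * |t - 0| :=
          intervalIntegral.norm_integral_le_of_norm_le_const
            (fun s hs => (bnd₂ s (hIsub t ht hs)).2)
      _ ≤ B * τ := by
          rw [sub_zero, abs_of_nonneg ht.1]
          exact mul_le_mul_of_nonneg_left ht.2 hB0.le
  -- J₂' bound: ‖Φ (J₂' t) - 1‖ ≤ kmax * B * τ * τ on [0, τ]
  have b2' : ∀ t ∈ Set.Icc (0:ℝ) τ, ‖Φ (J₂' t) - 1‖ ≤ kmax * B * τ * τ := by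
    intro t ht
    have hi := ftc _ _ dF₂' cG₂ 0 t
    rw [e20', hΦone] at hi
    rw [← hi]
    calc ‖∫ s in (0:ℝ)..t, -(Φ (K s) * Φ (J₂ s))‖ ≤ kmax * (B * τ) * |t - 0| := by
          refine intervalIntegral.norm_integral_le_of_norm_le_const ?_
          intro s hs
          have hsI := hIsub t ht hs
          rw [norm_neg]
          refine (norm_mul_le _ _).trans ?_
          have h1 : ‖Φ (K s)‖ ≤ kmax := by rw [hΦ]; exact hKb s
          exact mul_le_mul h1 (b2 s hsI) (norm_nonneg _) hkmax.le
      _ ≤ kmax * B * τ * τ := by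
          rw [sub_zero, abs_of_nonneg ht.1]
          calc kmax * (B * τ) * t ≤ kmax * (B * τ) * τ :=
                mul_le_mul_of_nonneg_left ht.2 (by positivity)
            _ = kmax * B * τ * τ := by ring
  have hselfI : τ ∈ Set.Icc (0:ℝ) τ := ⟨hτ0, le_refl τ⟩
  constructor
  · -- first estimate
    have hi := ftc _ _ dF₁ cF₁' 0 τ
    rw [e10, hΦone] at hi
    have hnorm : ‖Φ (J₁ τ) - 1‖ ≤ kmax * B * τ * τ := by
      rw [← hi]
      calc ‖∫ s in (0:ℝ)..τ, Φ (J₁' s)‖ ≤ kmax * B * τ * |τ - 0| :=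
            intervalIntegral.norm_integral_le_of_norm_le_const
              (fun s hs => b1' s (hIsub τ hselfI hs))
        _ = kmax * B * τ * τ := by rw [sub_zero, abs_of_nonneg hτ0]
    have heq : Matrix.toEuclideanCLM (𝕜 := ℝ) (J₁ τ - 1) = Φ (J₁ τ) - 1 := by
      rw [← hΦ, _root_.map_sub, hΦone]
    have hop : opNorm (J₁ τ - 1) = ‖Φ (J₁ τ) - 1‖ := by rw [opNorm, heq]
    rw [hop]
    calc ‖Φ (J₁ τ) - 1‖ ≤ kmax * B * τ * τ := hnorm
      _ = kmax * B * τ ^ 2 := by ring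
  · -- second estimate
    have dH : ∀ t, HasDerivAt (fun s => Φ (J₂ s) - s • (1 :
        EuclideanSpace ℝ (Fin m) →L[ℝ] EuclideanSpace ℝ (Fin m))) (Φ (J₂' t) - 1) t := by
      intro t
      have h1 : HasDerivAt (fun s : ℝ => s • (1 :
          EuclideanSpace ℝ (Fin m) →L[ℝ] EuclideanSpace ℝ (Fin m))) ((1:ℝ) • 1) t :=
        (hasDerivAt_id t).smul_const (1 : EuclideanSpace ℝ (Fin m) →L[ℝ] EuclideanSpace ℝ (Fin m))
      rw [one_smul] at h1
      exact (dF₂ t).sub h1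
    have cH' : Continuous fun s => Φ (J₂' s) - (1 :
        EuclideanSpace ℝ (Fin m) →L[ℝ] EuclideanSpace ℝ (Fin m)) := cF₂'.sub continuous_const
    have hi := ftc _ _ dH cH' 0 τ
    simp only [e20, _root_.map_zero] at hi
    rw [show ((0:ℝ) • (1 : EuclideanSpace ℝ (Fin m) →L[ℝ] EuclideanSpace ℝ (Fin m))) = 0 from
      zero_smul ℝ (1 : EuclideanSpace ℝ (Fin m) →L[ℝ] EuclideanSpace ℝ (Fin m)), sub_zero, sub_zero] at hi
    have hnorm : ‖Φ (J₂ τ) - τ • (1 :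
        EuclideanSpace ℝ (Fin m) →L[ℝ] EuclideanSpace ℝ (Fin m))‖ ≤ kmax * B * τ * τ * τ := by
      rw [← hi]
      calc ‖∫ s in (0:ℝ)..τ, (Φ (J₂' s) - 1)‖ ≤ kmax * B * τ * τ * |τ - 0| :=
            intervalIntegral.norm_integral_le_of_norm_le_const
              (fun s hs => b2' s (hIsub τ hselfI hs))
        _ = kmax * B * τ * τ * τ := by rw [sub_zero, abs_of_nonneg hτ0]
    have heq : Matrix.toEuclideanCLM (𝕜 := ℝ) (J₂ τ - τ • 1) = Φ (J₂ τ) - τ • 1 := by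
      rw [← hΦ, _root_.map_sub, _root_.map_smul, hΦone]
    have hop : opNorm (J₂ τ - τ • (1 : Matrix (Fin m) (Fin m) ℝ)) = ‖Φ (J₂ τ) - τ • (1 :
        EuclideanSpace ℝ (Fin m) →L[ℝ] EuclideanSpace ℝ (Fin m))‖ := by rw [opNorm, heq]
    rw [hop]
    calc ‖Φ (J₂ τ) - τ • (1 : EuclideanSpace ℝ (Fin m) →L[ℝ] EuclideanSpace ℝ (Fin m))‖
        ≤ kmax * B * τ * τ * τ := hnorm
      _ = kmax * B * τ ^ 3 := by ring
end
end
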